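/- arXiv:2108.04011 — 2 statements merged into one kernel-verified Lean document; each statement's English description precedes it below -/
import Mathlib

section
/- For every m ∈ {2,…,q} and every configuration σ ∈ B̄^2_{ℓ*−1,ℓ*}(m,1) (all spins m except a quasi-square (ℓ*−1)×ℓ* of spins 1 with a bar of length 2 attached to one of its sides of length ℓ*), there exists a path γ from σ to the stable state 𝟏 whose maximum energy satisfies max_{ξ∈γ} H(ξ) < 4ℓ* − h(ℓ*(ℓ*−1)+1) + H(𝐦). -/
set_option linter.unusedSectionVars false
set_option linter.unusedVariables false
set_option linter.unnecessarySimpa false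


/-!
Metastability for the q-state Potts model with positive external magnetic field
on the K × L torus, under Glauber (single-spin-flip) dynamics.
-/

namespace PottsPos

/-- Vertices of the `K × L` torus (periodic boundary conditions). -/
abbrev Vtx (K L : ℕ) := ZMod K × ZMod L

/-- Spin configurations; spins are natural numbers
(valid configurations take values in `{1,…,q}`). -/
abbrev Cfg (K L : ℕ) := Vtx K L → ℕ

/-- `σ` is a genuine `q`-state Potts configuration: all spins lie in `{1,…,q}`. -/
def IsConf (q K L : ℕ) (σ : Cfg K L) : Prop := ∀ v, 1 ≤ σ v ∧ σ v ≤ q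

/-- The constant configuration with all spins equal to `s`. -/
def const (K L s : ℕ) : Cfg K L := fun _ => s

/-- Nearest-neighbour adjacency on the torus. -/
def Adj (K L : ℕ) (v w : Vtx K L) : Prop :=
  w = (v.1 + 1, v.2) ∨ w = (v.1 - 1, v.2) ∨ w = (v.1, v.2 + 1) ∨ w = (v.1, v.2 - 1)

/-- The Hamiltonian
`H(σ) = −Σ_{(v,w)∈E} 1{σ(v)=σ(w)} − h·Σ_{v∈Λ} 1{σ(v)=1}`,
where each torus edge is counted once via its "forward" endpoints. -/
noncomputable def energy (K L : ℕ) [NeZero K] [NeZero L] (h : ℝ) (σ : Cfg K L) : ℝ :=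
  -(∑ v : Vtx K L, ((if σ v = σ (v.1 + 1, v.2) then (1 : ℝ) else 0)
      + (if σ v = σ (v.1, v.2 + 1) then (1 : ℝ) else 0)))
    - h * ∑ v : Vtx K L, (if σ v = 1 then (1 : ℝ) else 0)

/-- Two configurations communicate iff they differ at exactly one vertex. -/
def Communicates (K L : ℕ) (σ σ' : Cfg K L) : Prop :=
  ∃ v, σ v ≠ σ' v ∧ ∀ w, w ≠ v → σ w = σ' w

/-- `ω` is a path from `σ` to `σ'` in the space of valid configurations:
a nonempty finite sequence starting at `σ`, ending at `σ'`,
in which consecutive configurations communicate. -/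
def IsPath (q K L : ℕ) (σ σ' : Cfg K L) (ω : List (Cfg K L)) : Prop :=
  ω.head? = some σ ∧ ω.getLast? = some σ' ∧ ω.Chain' (Communicates K L) ∧
    ∀ η ∈ ω, IsConf q K L η

/-- The height of a path: the maximal energy along it. -/
noncomputable def height (K L : ℕ) [NeZero K] [NeZero L] (h : ℝ)
    (ω : List (Cfg K L)) : ℝ :=
  sSup (energy K L h '' {η | η ∈ ω})

/-- The communication height `Φ(σ,σ')`: minimal height over all paths `σ → σ'`. -/
noncomputable def Phi (q K L : ℕ) [NeZero K] [NeZero L] (h : ℝ) (σ σ' : Cfg K L) : ℝ :=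
  sInf (height K L h '' {ω | IsPath q K L σ σ' ω})

/-- The communication height `Φ(σ,A) = min_{σ'∈A} Φ(σ,σ')`. -/
noncomputable def PhiSet (q K L : ℕ) [NeZero K] [NeZero L] (h : ℝ) (σ : Cfg K L)
    (A : Set (Cfg K L)) : ℝ :=
  sInf (Phi q K L h σ '' A)

/-- Optimal paths from `σ` to `σ'`: paths whose height equals `Φ(σ,σ')`. -/
def IsOptPath (q K L : ℕ) [NeZero K] [NeZero L] (h : ℝ) (σ σ' : Cfg K L)
    (ω : List (Cfg K L)) : Prop :=
  IsPath q K L σ σ' ω ∧ height K L h ω = Phi q K L h σ σ'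

/-- Optimal paths from `σ` to the set `A`: paths from `σ` to some element of `A`
whose height equals `Φ(σ,A)`. -/
def IsOptPathSet (q K L : ℕ) [NeZero K] [NeZero L] (h : ℝ) (σ : Cfg K L)
    (A : Set (Cfg K L)) (ω : List (Cfg K L)) : Prop :=
  ∃ σ' ∈ A, IsPath q K L σ σ' ω ∧ height K L h ω = PhiSet q K L h σ A

/-- The stability level `V_σ = Φ(σ, I_σ) − H(σ)`, `I_σ = {η : H(η) < H(σ)}`. -/
noncomputable def stabLevel (q K L : ℕ) [NeZero K] [NeZero L] (h : ℝ)
    (σ : Cfg K L) : ℝ :=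
  PhiSet q K L h σ {η | IsConf q K L η ∧ energy K L h η < energy K L h σ}
    - energy K L h σ

/-- The stable set `X^s`: global minima of the Hamiltonian. -/
def stableSet (q K L : ℕ) [NeZero K] [NeZero L] (h : ℝ) : Set (Cfg K L) :=
  {σ | IsConf q K L σ ∧ ∀ η, IsConf q K L η → energy K L h σ ≤ energy K L h η}

/-- The metastable set `X^m`: non-stable states of maximal stability level. -/
noncomputable def metastableSet (q K L : ℕ) [NeZero K] [NeZero L] (h : ℝ) :
    Set (Cfg K L) :=
  {σ | IsConf q K L σ ∧ σ ∉ stableSet q K L h ∧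
    stabLevel q K L h σ =
      sSup {t | ∃ η, IsConf q K L η ∧ η ∉ stableSet q K L h ∧ stabLevel q K L h η = t}}

/-- The critical length `ℓ* = ⌈2/h⌉`. -/
noncomputable def ellStar (h : ℝ) : ℕ := ⌈(2 : ℝ) / h⌉₊

/-- The energy barrier `Γ = 4ℓ* − h(ℓ*(ℓ*−1)+1)`. -/
noncomputable def Gamma (h : ℝ) : ℝ :=
  4 * (ellStar h : ℝ) - h * ((ellStar h : ℝ) * ((ellStar h : ℝ) - 1) + 1)

/-- `W` is a gate for the transition `σ → A`: every configuration of `W` lies on some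
optimal path from `σ` to `A` at energy `Φ(σ,A)`, and every optimal path from `σ`
to `A` visits `W`. -/
def IsGate (q K L : ℕ) [NeZero K] [NeZero L] (h : ℝ) (σ : Cfg K L)
    (A W : Set (Cfg K L)) : Prop :=
  (∀ η ∈ W, ∃ ω, IsOptPathSet q K L h σ A ω ∧ η ∈ ω ∧
      energy K L h η = PhiSet q K L h σ A) ∧
  ∀ ω, IsOptPathSet q K L h σ A ω → ∃ η ∈ W, η ∈ ω

/-- A minimal gate: a gate no proper subset of which is a gate. -/
def IsMinimalGate (q K L : ℕ) [NeZero K] [NeZero L] (h : ℝ) (σ : Cfg K L)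
    (A W : Set (Cfg K L)) : Prop :=
  IsGate q K L h σ A W ∧ ∀ W', W' ⊂ W → ¬ IsGate q K L h σ A W'

/-- A `p × r` rectangle (p rows, r columns) on the torus with base point `(x,y)`. -/
def rect (K L : ℕ) (x : ZMod K) (y : ZMod L) (p r : ℕ) : Set (Vtx K L) :=
  {v | ∃ i j : ℕ, i < p ∧ j < r ∧ v = (x + (i : ZMod K), y + (j : ZMod L))}

/-- `A` is an `a × b` rectangle on the torus (in either orientation). -/
def IsRect (K L : ℕ) (A : Set (Vtx K L)) (a b : ℕ) : Prop :=
  ∃ x y, A = rect K L x y a b ∨ A = rect K L x y b a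

/-- `R̄_{a,b}(r,s)`: configurations equal to `r` everywhere except on an
`a × b` rectangle where they equal `s`. -/
def Rbar (K L a b r s : ℕ) : Set (Cfg K L) :=
  {σ | ∃ A, IsRect K L A a b ∧ (∀ v ∈ A, σ v = s) ∧ ∀ v ∉ A, σ v = r}

/-- A horizontal bar of `l` cells in row `x`, starting at column `y`. -/
def hbar (K L : ℕ) (x : ZMod K) (y : ZMod L) (l : ℕ) : Set (Vtx K L) :=
  {v | ∃ j : ℕ, j < l ∧ v = (x, y + (j : ZMod L))}

/-- A vertical bar of `l` cells in column `y`, starting at row `x`. -/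
def vbar (K L : ℕ) (x : ZMod K) (y : ZMod L) (l : ℕ) : Set (Vtx K L) :=
  {v | ∃ j : ℕ, j < l ∧ v = (x + (j : ZMod K), y)}

/-- `A` is an `a × b` rectangle together with a `1 × l` bar adjacent to one of the
sides of length `b` (in either orientation of the rectangle). -/
def IsRectWithBar (K L : ℕ) (A : Set (Vtx K L)) (a b l : ℕ) : Prop :=
  ∃ (x : ZMod K) (y : ZMod L) (j0 : ℕ), j0 + l ≤ b ∧
    (A = rect K L x y a b ∪ hbar K L (x + (a : ZMod K)) (y + (j0 : ZMod L)) l ∨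
     A = rect K L x y a b ∪ hbar K L (x - 1) (y + (j0 : ZMod L)) l ∨
     A = rect K L x y b a ∪ vbar K L (x + (j0 : ZMod K)) (y + (a : ZMod L)) l ∨
     A = rect K L x y b a ∪ vbar K L (x + (j0 : ZMod K)) (y - 1) l)

/-- `B̄^l_{a,b}(r,s)`: configurations equal to `r` everywhere except on an
`a × b` rectangle with a `1 × l` bar attached to a side of length `b`,
where they equal `s`. -/
def Bbar (K L a b l r s : ℕ) : Set (Cfg K L) :=
  {σ | ∃ A, IsRectWithBar K L A a b l ∧ (∀ v ∈ A, σ v = s) ∧ ∀ v ∉ A, σ v = r}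

/-- Connectedness of a set of vertices under torus adjacency. -/
def ConnSet (K L : ℕ) (C : Set (Vtx K L)) : Prop :=
  ∀ u ∈ C, ∀ w ∈ C, ∃ γ : List (Vtx K L), γ.head? = some u ∧ γ.getLast? = some w ∧
    γ.Chain' (Adj K L) ∧ ∀ v ∈ γ, v ∈ C

/-- The perimeter of a set of vertices: the number of torus edges joining it
to its complement. -/
noncomputable def perimeter (K L : ℕ) (C : Set (Vtx K L)) : ℕ :=
  Set.ncard {p : Vtx K L × Vtx K L | Adj K L p.1 p.2 ∧ p.1 ∈ C ∧ p.2 ∉ C}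

/-- The external boundary `∂C` of a set of configurations. -/
def extBoundary (q K L : ℕ) (C : Set (Cfg K L)) : Set (Cfg K L) :=
  {η | IsConf q K L η ∧ η ∉ C ∧ ∃ σ ∈ C, Communicates K L σ η}

/-- Connectedness of a set of configurations under single-spin updates. -/
def ConnCfg (q K L : ℕ) (C : Set (Cfg K L)) : Prop :=
  ∀ σ ∈ C, ∀ η ∈ C, ∃ ω, IsPath q K L σ η ω ∧ ∀ ξ ∈ ω, ξ ∈ C

/-- A cycle: a nonempty set of configurations which is either a singleton, or is
connected with `max H` inside strictly below `min H` on the external boundary. -/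
def IsCycle (q K L : ℕ) [NeZero K] [NeZero L] (h : ℝ) (C : Set (Cfg K L)) : Prop :=
  C.Nonempty ∧ (∀ σ ∈ C, IsConf q K L σ) ∧
    ((∃ σ, C = {σ}) ∨
      (ConnCfg q K L C ∧
        sSup (energy K L h '' C) < sInf (energy K L h '' extBoundary q K L C)))

open Classical in
/-- The depth of a cycle: `0` for singletons, otherwise
`min H on ∂C − min H on C`. -/
noncomputable def depth (q K L : ℕ) [NeZero K] [NeZero L] (h : ℝ)
    (C : Set (Cfg K L)) : ℝ :=
  if ∃ σ, C = {σ} then 0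
  else sInf (energy K L h '' extBoundary q K L C) - sInf (energy K L h '' C)

/-- `D^m`: configurations with exactly `KL − (ℓ*(ℓ*−1)+1)` spins equal to `m`. -/
def Dm (q K L : ℕ) (h : ℝ) (m : ℕ) : Set (Cfg K L) :=
  {σ | IsConf q K L σ ∧
    Set.ncard {v | σ v = m} = K * L - (ellStar h * (ellStar h - 1) + 1)}

/-- `F(D^m)`: the minimizers of the energy on `D^m`. -/
def FDm (q K L : ℕ) [NeZero K] [NeZero L] (h : ℝ) (m : ℕ) : Set (Cfg K L) :=
  {σ | σ ∈ Dm q K L h m ∧ ∀ η ∈ Dm q K L h m, energy K L h σ ≤ energy K L h η}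

/-- `n_s(v)`: the number of nearest neighbours of `v` whose spin in `σ` is `s`. -/
noncomputable def nnbr (K L : ℕ) (σ : Cfg K L) (v : Vtx K L) (s : ℕ) : ℕ :=
  Set.ncard {w | Adj K L v w ∧ σ w = s}


/-- position of column j in the filling order of the bar row -/
def bpos (b j0 j : ℕ) : ℕ := if j0 ≤ j then j - j0 else (b - j0) + (j0 - 1 - j)

lemma bpos_lt {b j0 j : ℕ} (hj0 : j0 + 2 ≤ b) (hj : j < b) : bpos b j0 j < b := by
  unfold bpos; split <;> omega

lemma bpos_inj {b j0 j j' : ℕ} (hj0 : j0 + 2 ≤ b) (hj : j < b) (hj' : j' < b)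
    (h : bpos b j0 j = bpos b j0 j') : j = j' := by
  unfold bpos at h; split at h <;> split at h <;> omega

lemma bpos_j0 {b j0 : ℕ} : bpos b j0 j0 = 0 := by unfold bpos; simp

lemma bpos_j0' {b j0 : ℕ} : bpos b j0 (j0+1) = 1 := by unfold bpos; simp

lemma bpos_eq_zero {b j0 j : ℕ} (hj0 : j0 + 2 ≤ b) (h : bpos b j0 j = 0) : j = j0 := by
  unfold bpos at h; split at h <;> omega

lemma bpos_eq_one {b j0 j : ℕ} (hj0 : j0 + 2 ≤ b) (h : bpos b j0 j = 1) : j = j0 + 1 := by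
  unfold bpos at h; split at h <;> omega

section Ord
variable (K L : ℕ) [NeZero K] [NeZero L] (x : ZMod K) (y : ZMod L) (ε : ZMod K)
    (a b j0 : ℕ)

/-- row coordinate of a vertex relative to base `x` and direction `ε` -/
def ic (v : Vtx K L) : ℕ := (ε * (v.1 - x)).val
/-- column coordinate -/
def jc (v : Vtx K L) : ℕ := (v.2 - y).val

/-- the filling order -/
def ordN (v : Vtx K L) : ℕ :=
  if jc K L y v < b then
    (ic K L x ε v) * b + (if ic K L x ε v = a then bpos b j0 (jc K L y v) else jc K L y v)
  else K * b + (jc K L y v - b) * K + ic K L x ε v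

/-- the configuration after `t` spin flips -/
def cfgAt (m t : ℕ) : Cfg K L := fun v => if ordN K L x y ε a b j0 v < t then 1 else m

variable {K L}

lemma ic_lt (v : Vtx K L) : ic K L x ε v < K := ZMod.val_lt _
lemma jc_lt (v : Vtx K L) : jc K L y v < L := ZMod.val_lt _

lemma fst_eq (hε : ε * ε = 1) (v : Vtx K L) : v.1 = x + ε * (ic K L x ε v : ZMod K) := by
  have h : (ic K L x ε v : ZMod K) = ε * (v.1 - x) := by
    simpa [ic] using (ZMod.natCast_val (ε * (v.1 - x))).trans (ZMod.cast_id _ _)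
  rw [h, ← mul_assoc, hε, one_mul]; ring

lemma snd_eq (v : Vtx K L) : v.2 = y + (jc K L y v : ZMod L) := by
  have h : (jc K L y v : ZMod L) = v.2 - y := by
    simpa [jc] using (ZMod.natCast_val (v.2 - y)).trans (ZMod.cast_id _ _)
  rw [h]; ring

lemma ic_mk (hε : ε * ε = 1) (i : ℕ) (hi : i < K) (w : ZMod L) :
    ic K L x ε (x + ε * (i : ZMod K), w) = i := by
  unfold ic
  have h : ε * (x + ε * (i : ZMod K) - x) = (i : ZMod K) := by
    rw [add_sub_cancel_left, ← mul_assoc, hε, one_mul]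
  rw [h, ZMod.val_cast_of_lt hi]

lemma jc_mk (j : ℕ) (hj : j < L) (w : ZMod K) :
    jc K L y (w, y + (j : ZMod L)) = j := by
  unfold jc; rw [add_sub_cancel_left, ZMod.val_cast_of_lt hj]

lemma ordN_lt (hj0 : j0 + 2 ≤ b) (hb : b ≤ L) (v : Vtx K L) :
    ordN K L x y ε a b j0 v < K * L := by
  have hi := ic_lt x ε v
  have hj := jc_lt y v
  have hK1 : 1 ≤ K := Nat.pos_of_ne_zero (NeZero.ne K)
  unfold ordN
  split
  · have he : (if ic K L x ε v = a then bpos b j0 (jc K L y v) else jc K L y v) < b := by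
      split
      · exact bpos_lt hj0 (by assumption)
      · assumption
    calc ic K L x ε v * b + _ < ic K L x ε v * b + b := Nat.add_lt_add_left he _
      _ = (ic K L x ε v + 1) * b := by ring
      _ ≤ K * b := Nat.mul_le_mul_right b hi
      _ ≤ K * L := Nat.mul_le_mul_left K hb
  · rename_i hge
    push_neg at hge
    calc K * b + (jc K L y v - b) * K + ic K L x ε v
        < K * b + (jc K L y v - b) * K + K := by omega
      _ = K * b + (jc K L y v - b + 1) * K := by ring
      _ ≤ K * b + (L - b) * K := by
          have : jc K L y v - b + 1 ≤ L - b := by omega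
          exact Nat.add_le_add_left (Nat.mul_le_mul_right K this) _
      _ = K * L := by
          have hbL : b + (L - b) = L := by omega
          calc K * b + (L - b) * K = K * (b + (L - b)) := by ring
            _ = K * L := by rw [hbL]


lemma mul_add_lt_inj {b i e i' e' : ℕ} (he : e < b) (he' : e' < b)
    (h : i * b + e = i' * b + e') : i = i' ∧ e = e' := by
  have hb : 0 < b := by omega
  have h1 : (i * b + e) / b = i := by
    rw [mul_comm, Nat.mul_add_div hb, Nat.div_eq_of_lt he, add_zero]
  have h2 : (i' * b + e') / b = i' := by
    rw [mul_comm, Nat.mul_add_div hb, Nat.div_eq_of_lt he', add_zero]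
  have hii : i = i' := by rw [← h1, ← h2, h]
  subst hii
  exact ⟨rfl, by omega⟩

lemma ordN_coords_inj (hε : ε * ε = 1) {v w : Vtx K L}
    (hi : ic K L x ε v = ic K L x ε w) (hj : jc K L y v = jc K L y w) : v = w := by
  have h1 : v.1 = w.1 := by rw [fst_eq x ε hε v, fst_eq x ε hε w, hi]
  have h2 : v.2 = w.2 := by rw [snd_eq y v, snd_eq y w, hj]
  exact Prod.ext h1 h2

lemma e_lt_b {a b j0 i j : ℕ} (hj0 : j0 + 2 ≤ b) (hj : j < b) :
    (if i = a then bpos b j0 j else j) < b := by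
  split
  · exact bpos_lt hj0 hj
  · exact hj

lemma ordN_inj (hε : ε * ε = 1) (hj0 : j0 + 2 ≤ b) :
    Function.Injective (ordN K L x y ε a b j0) := by
  intro v w hvw
  have hiv := ic_lt x ε v; have hiw := ic_lt x ε w
  have hjv := jc_lt y v; have hjw := jc_lt y w
  have key : ic K L x ε v = ic K L x ε w ∧ jc K L y v = jc K L y w := by
    by_cases h1 : jc K L y v < b <;> by_cases h2 : jc K L y w < b <;>
      unfold ordN at hvw
    · rw [if_pos h1, if_pos h2] at hvw
      obtain ⟨hii, hee⟩ := mul_add_lt_inj (e_lt_b hj0 h1) (e_lt_b hj0 h2) hvw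
      refine ⟨hii, ?_⟩
      rw [hii] at hee
      by_cases hia : ic K L x ε w = a
      · rw [if_pos hia, if_pos hia] at hee
        exact bpos_inj hj0 h1 h2 hee
      · rwa [if_neg hia, if_neg hia] at hee
    · exfalso
      rw [if_pos h1, if_neg h2] at hvw
      have hlt : ic K L x ε v * b +
          (if ic K L x ε v = a then bpos b j0 (jc K L y v) else jc K L y v) < K * b :=
        calc ic K L x ε v * b + _ < ic K L x ε v * b + b :=
              Nat.add_lt_add_left (e_lt_b hj0 h1) _
          _ = (ic K L x ε v + 1) * b := by ring
          _ ≤ K * b := Nat.mul_le_mul_right b hiv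
      omega
    · exfalso
      rw [if_neg h1, if_pos h2] at hvw
      have hlt : ic K L x ε w * b +
          (if ic K L x ε w = a then bpos b j0 (jc K L y w) else jc K L y w) < K * b :=
        calc ic K L x ε w * b + _ < ic K L x ε w * b + b :=
              Nat.add_lt_add_left (e_lt_b hj0 h2) _
          _ = (ic K L x ε w + 1) * b := by ring
          _ ≤ K * b := Nat.mul_le_mul_right b hiw
      omega
    · rw [if_neg h1, if_neg h2] at hvw
      have h3 : (jc K L y v - b) * K + ic K L x ε v
          = (jc K L y w - b) * K + ic K L x ε w := by omega
      obtain ⟨hjj, hii⟩ := mul_add_lt_inj hiv hiw h3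
      exact ⟨hii, by omega⟩
  exact ordN_coords_inj x y ε hε key.1 key.2

lemma ordN_surj (hε : ε * ε = 1) (hj0 : j0 + 2 ≤ b) (hbL : b ≤ L) :
    ∀ u < K * L, ∃ v : Vtx K L, ordN K L x y ε a b j0 v = u := by
  have hcard : Fintype.card (Vtx K L) = Fintype.card (Fin (K * L)) := by
    simp [Fintype.card_prod, ZMod.card]
  set F : Vtx K L → Fin (K * L) := fun v => ⟨ordN K L x y ε a b j0 v,
    ordN_lt x y ε a b j0 hj0 hbL v⟩ with hF
  have hinj : Function.Injective F := by
    intro v w hvw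
    exact ordN_inj x y ε a b j0 hε hj0 (by simpa [hF, Fin.ext_iff] using hvw)
  have hbij : Function.Bijective F :=
    (Fintype.bijective_iff_injective_and_card F).mpr ⟨hinj, hcard⟩
  intro u hu
  obtain ⟨v, hv⟩ := hbij.2 ⟨u, hu⟩
  exact ⟨v, by simpa [hF, Fin.ext_iff] using hv⟩

end Ord

section Flip
variable {K L : ℕ} [NeZero K] [NeZero L]

lemma zmod_one_ne_zero {K : ℕ} (h3 : 3 ≤ K) : (1 : ZMod K) ≠ 0 := by
  intro h
  have h1 : ((1 : ℕ) : ZMod K) = 0 := by exact_mod_cast h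
  have := (ZMod.natCast_eq_zero_iff 1 K).mp h1
  have := Nat.le_of_dvd one_pos this
  omega

lemma sub_one_ne {K : ℕ} (h3 : 3 ≤ K) (u : ZMod K) : u - 1 ≠ u := by
  intro h
  have : (1 : ZMod K) = 0 := by
    have := sub_eq_self.mp h
    simpa using this
  exact zmod_one_ne_zero h3 this

lemma add_one_ne {K : ℕ} (h3 : 3 ≤ K) (u : ZMod K) : u + 1 ≠ u := by
  intro h
  have : (1 : ZMod K) = 0 := by
    have := add_eq_left.mp h
    simpa using this
  exact zmod_one_ne_zero h3 this

lemma ind_comm (x y : ℕ) : (if x = y then (1:ℝ) else 0) = (if y = x then (1:ℝ) else 0) := by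
  simp [eq_comm]

lemma energy_flip (hK : 3 ≤ K) (hL : 3 ≤ L) (h : ℝ) (σ : Cfg K L) (v : Vtx K L)
    (r s : ℕ) (hv : σ v = r) (hrs : s ≠ r) :
    energy K L h (Function.update σ v s) = energy K L h σ
      + ((if σ (v.1 + 1, v.2) = r then (1:ℝ) else 0)
         + (if σ (v.1 - 1, v.2) = r then (1:ℝ) else 0)
         + (if σ (v.1, v.2 + 1) = r then (1:ℝ) else 0)
         + (if σ (v.1, v.2 - 1) = r then (1:ℝ) else 0))
      - ((if σ (v.1 + 1, v.2) = s then (1:ℝ) else 0)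
         + (if σ (v.1 - 1, v.2) = s then (1:ℝ) else 0)
         + (if σ (v.1, v.2 + 1) = s then (1:ℝ) else 0)
         + (if σ (v.1, v.2 - 1) = s then (1:ℝ) else 0))
      - h * ((if s = 1 then (1:ℝ) else 0) - (if r = 1 then (1:ℝ) else 0)) := by
  classical
  set σ' := Function.update σ v s with hσ'
  -- basic ZMod facts
  have hK1 : (1 : ZMod K) ≠ 0 := zmod_one_ne_zero hK
  have hL1 : (1 : ZMod L) ≠ 0 := zmod_one_ne_zero hL
  set p1 : Vtx K L := (v.1 - 1, v.2) with hp1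
  set p2 : Vtx K L := (v.1, v.2 - 1) with hp2
  have hvp1 : p1 ≠ v := by
    intro hcontra
    exact sub_one_ne hK v.1 (congrArg Prod.fst hcontra)
  have hvp2 : p2 ≠ v := by
    intro hcontra
    exact sub_one_ne hL v.2 (congrArg Prod.snd hcontra)
  have hp12 : p1 ≠ p2 := by
    intro hcontra
    exact sub_one_ne hK v.1 (congrArg Prod.fst hcontra)
  -- neighbours of v differ from v
  have hn1 : ((v.1 + 1, v.2) : Vtx K L) ≠ v := by
    intro hcontra
    exact add_one_ne hK v.1 (congrArg Prod.fst hcontra)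
  have hn2 : ((v.1, v.2 + 1) : Vtx K L) ≠ v := by
    intro hcontra
    exact add_one_ne hL v.2 (congrArg Prod.snd hcontra)
  have hn3 : ((p1.1, p1.2 + 1) : Vtx K L) ≠ v := by
    intro hcontra
    exact sub_one_ne hK v.1 (congrArg Prod.fst hcontra)
  have hn4 : ((p2.1 + 1, p2.2) : Vtx K L) ≠ v := by
    intro hcontra
    exact sub_one_ne hL v.2 (congrArg Prod.snd hcontra)
  have hup1 : p1.1 + 1 = v.1 := by simp [hp1]
  have hup2 : p2.2 + 1 = v.2 := by simp [hp2]
  -- edge term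
  set A : Vtx K L → ℝ := fun w => (if σ w = σ (w.1 + 1, w.2) then (1:ℝ) else 0)
      + (if σ w = σ (w.1, w.2 + 1) then (1:ℝ) else 0) with hA
  set A' : Vtx K L → ℝ := fun w => (if σ' w = σ' (w.1 + 1, w.2) then (1:ℝ) else 0)
      + (if σ' w = σ' (w.1, w.2 + 1) then (1:ℝ) else 0) with hA'
  set S : Finset (Vtx K L) := {v, p1, p2} with hS
  have hout : ∀ w ∉ S, A' w - A w = 0 := by
    intro w hw
    simp only [hS, Finset.mem_insert, Finset.mem_singleton, not_or] at hw
    obtain ⟨hw0, hw1, hw2⟩ := hw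
    have e0 : σ' w = σ w := Function.update_of_ne hw0 _ _
    have e1 : σ' (w.1 + 1, w.2) = σ (w.1 + 1, w.2) := by
      apply Function.update_of_ne
      intro hcontra
      apply hw1
      rw [hp1, ← hcontra]
      ext <;> simp
    have e2 : σ' (w.1, w.2 + 1) = σ (w.1, w.2 + 1) := by
      apply Function.update_of_ne
      intro hcontra
      apply hw2
      rw [hp2, ← hcontra]
      ext <;> simp
    simp only [hA', hA, e0, e1, e2]
    ring
  have hedge : ∑ w : Vtx K L, A' w - ∑ w : Vtx K L, A w = ∑ w ∈ S, (A' w - A w) := by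
    rw [← Finset.sum_sub_distrib]
    exact (Finset.sum_subset (Finset.subset_univ S) (fun w _ hw => hout w hw)).symm
  have hSsum : ∑ w ∈ S, (A' w - A w) = (A' v - A v) + (A' p1 - A p1) + (A' p2 - A p2) := by
    rw [hS]
    rw [Finset.sum_insert (by simp [Finset.mem_insert, Finset.mem_singleton, hvp1.symm, hvp2.symm, Ne])]
    rw [Finset.sum_pair hp12]
    ring
  -- evaluate the three terms
  have hv0 : σ' v = s := Function.update_self _ _ _
  have eA0 : A' v - A v
      = (if s = σ (v.1 + 1, v.2) then (1:ℝ) else 0) + (if s = σ (v.1, v.2 + 1) then (1:ℝ) else 0)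
        - (if r = σ (v.1 + 1, v.2) then (1:ℝ) else 0) - (if r = σ (v.1, v.2 + 1) then (1:ℝ) else 0) := by
    have e1 : σ' (v.1 + 1, v.2) = σ (v.1 + 1, v.2) := Function.update_of_ne hn1 _ _
    have e2 : σ' (v.1, v.2 + 1) = σ (v.1, v.2 + 1) := Function.update_of_ne hn2 _ _
    simp only [hA', hA, hv0, hv, e1, e2]
    ring
  have eA1 : A' p1 - A p1
      = (if σ p1 = s then (1:ℝ) else 0) - (if σ p1 = r then (1:ℝ) else 0) := by
    have h1 : σ' p1 = σ p1 := Function.update_of_ne hvp1 _ _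
    have h2 : σ' (p1.1 + 1, p1.2) = s := by
      rw [hup1]
      have : ((v.1, p1.2) : Vtx K L) = v := by rw [hp1]
      rw [this, hv0]
    have h3 : σ (p1.1 + 1, p1.2) = r := by
      rw [hup1]
      have : ((v.1, p1.2) : Vtx K L) = v := by rw [hp1]
      rw [this, hv]
    have h4 : σ' (p1.1, p1.2 + 1) = σ (p1.1, p1.2 + 1) := Function.update_of_ne hn3 _ _
    simp only [hA', hA, h1, h2, h3, h4]
    ring
  have eA2 : A' p2 - A p2
      = (if σ p2 = s then (1:ℝ) else 0) - (if σ p2 = r then (1:ℝ) else 0) := by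
    have h1 : σ' p2 = σ p2 := Function.update_of_ne hvp2 _ _
    have h2 : σ' (p2.1, p2.2 + 1) = s := by
      rw [hup2]
      have : ((p2.1, v.2) : Vtx K L) = v := by rw [hp2]
      rw [this, hv0]
    have h3 : σ (p2.1, p2.2 + 1) = r := by
      rw [hup2]
      have : ((p2.1, v.2) : Vtx K L) = v := by rw [hp2]
      rw [this, hv]
    have h4 : σ' (p2.1 + 1, p2.2) = σ (p2.1 + 1, p2.2) := Function.update_of_ne hn4 _ _
    simp only [hA', hA, h1, h2, h3, h4]
    ring
  -- field term
  set C : Vtx K L → ℝ := fun w => if σ w = 1 then (1:ℝ) else 0 with hC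
  set C' : Vtx K L → ℝ := fun w => if σ' w = 1 then (1:ℝ) else 0 with hC'
  have hfield : ∑ w : Vtx K L, C' w - ∑ w : Vtx K L, C w
      = (if s = 1 then (1:ℝ) else 0) - (if r = 1 then (1:ℝ) else 0) := by
    have houtC : ∀ w ∉ ({v} : Finset (Vtx K L)), C' w - C w = 0 := by
      intro w hw
      simp only [Finset.mem_singleton] at hw
      have e0 : σ' w = σ w := Function.update_of_ne hw _ _
      simp only [hC', hC, e0]
      ring
    have : ∑ w : Vtx K L, C' w - ∑ w : Vtx K L, C w = ∑ w ∈ ({v} : Finset (Vtx K L)), (C' w - C w) := by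
      rw [← Finset.sum_sub_distrib]
      exact (Finset.sum_subset (Finset.subset_univ _) (fun w _ hw => houtC w hw)).symm
    rw [this, Finset.sum_singleton]
    simp only [hC', hC, hv0, hv]
  -- assemble
  have expand : energy K L h σ' - energy K L h σ
      = -(∑ w : Vtx K L, A' w - ∑ w : Vtx K L, A w)
        - h * (∑ w : Vtx K L, C' w - ∑ w : Vtx K L, C w) := by
    simp only [energy, hA', hA, hC', hC]
    ring
  have final : energy K L h σ' - energy K L h σ
      = -((A' v - A v) + (A' p1 - A p1) + (A' p2 - A p2))
        - h * ((if s = 1 then (1:ℝ) else 0) - (if r = 1 then (1:ℝ) else 0)) := by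
    rw [expand, hedge, hSsum, hfield]
  rw [eA0, eA1, eA2] at final
  have c1 := ind_comm s (σ (v.1 + 1, v.2))
  have c2 := ind_comm s (σ (v.1, v.2 + 1))
  have c3 := ind_comm r (σ (v.1 + 1, v.2))
  have c4 := ind_comm r (σ (v.1, v.2 + 1))
  rw [c1, c2, c3, c4] at final
  have : σ p1 = σ (v.1 - 1, v.2) := by rw [hp1]
  have : σ p2 = σ (v.1, v.2 - 1) := by rw [hp2]
  simp only [hp1, hp2] at final
  linarith [final]

end Flip

/-- start steps of the construction (new row / new column) -/
def StartT (K b t : ℕ) : Prop := t < b ∨ (t < K*b ∧ b ∣ t) ∨ (K*b ≤ t ∧ K ∣ (t - K*b))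

instance StartT.dec (K b t : ℕ) : Decidable (StartT K b t) := by
  unfold StartT; exact inferInstance

/-- the closed-form count of start steps before time `t` -/
def Rc (K b t : ℕ) : ℕ :=
  if t ≤ b then t - 1
  else if t ≤ K * b then (b - 1) + (t - 1) / b
  else (b + K - 1) + (t - 1 - K * b) / K

lemma Rc_succ {K b : ℕ} (hK2 : 2 ≤ K) (hb1 : 1 ≤ b) (t : ℕ) (ht : 1 ≤ t) :
    (Rc K b (t + 1) : ℕ) = Rc K b t + (if StartT K b t then 1 else 0) := by
  have hbKb : b < K * b := by nlinarith
  rcases lt_trichotomy t b with h1 | h1 | h1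
  · -- t < b : start
    rw [if_pos (show StartT K b t from Or.inl h1)]
    unfold Rc
    rw [if_pos (by omega : t + 1 ≤ b), if_pos (by omega : t ≤ b)]
    omega
  · -- t = b : start (row 1)
    subst h1
    rw [if_pos (show StartT K t t from Or.inr (Or.inl ⟨hbKb, dvd_refl t⟩))]
    unfold Rc
    rw [if_neg (by omega : ¬ (t + 1 ≤ t)), if_pos (by omega : t + 1 ≤ K * t),
      if_pos (le_refl t)]
    rw [show t + 1 - 1 = t from rfl]
    rw [Nat.div_self (by omega : 0 < t)]
  · -- t > b
    rcases lt_trichotomy t (K * b) with h2 | h2 | h2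
    · -- b < t < K*b : row starts
      have hR1 : Rc K b (t + 1) = (b - 1) + t / b := by
        unfold Rc
        rw [if_neg (by omega), if_pos (by omega)]
        simp
      have hR2 : Rc K b t = (b - 1) + (t - 1) / b := by
        unfold Rc
        rw [if_neg (by omega), if_pos (by omega)]
      have hdiv : t / b = (t - 1) / b + if b ∣ t then 1 else 0 := by
        have h' := Nat.succ_div (a := t - 1) (b := b)
        rw [show t - 1 + 1 = t by omega] at h'
        exact h'
      by_cases hdvd : b ∣ t
      · rw [if_pos (show StartT K b t from Or.inr (Or.inl ⟨h2, hdvd⟩)), hR1, hR2, hdiv, if_pos hdvd]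
        all_goals omega
      · have hns : ¬ StartT K b t := by
          intro hS
          rcases hS with hS | ⟨_, hS⟩ | ⟨hS, _⟩
          · omega
          · exact hdvd hS
          · omega
        rw [if_neg hns, hR1, hR2, hdiv, if_neg hdvd]
        all_goals omega
    · -- t = K*b : column start
      rw [if_pos (show StartT K b t from Or.inr (Or.inr ⟨le_of_eq h2.symm, by rw [h2]; simp⟩))]
      have hR1 : Rc K b (t + 1) = (b + K - 1) + 0 := by
        unfold Rc
        rw [if_neg (by omega), if_neg (by omega)]
        rw [h2]
        simp
      have hR2 : Rc K b t = (b - 1) + (t - 1) / b := by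
        unfold Rc
        rw [if_neg (by omega), if_pos (by omega)]
      have hdiv : (t - 1) / b = K - 1 := by
        rw [h2]
        apply Nat.div_eq_of_lt_le
        · calc (K - 1) * b ≤ K * b - b := by
                rw [Nat.sub_mul, one_mul]
          _ ≤ K * b - 1 := by omega
        · have : (K - 1 + 1) * b = K * b := by
            rw [Nat.sub_add_cancel (by omega : 1 ≤ K)]
          omega
      rw [hR1, hR2, hdiv]
      omega
    · -- t > K*b : columns
      have hR1 : Rc K b (t + 1) = (b + K - 1) + (t - K * b) / K := by
        unfold Rc
        rw [if_neg (by omega), if_neg (by omega)]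
        congr 2
      have hR2 : Rc K b t = (b + K - 1) + (t - 1 - K * b) / K := by
        unfold Rc
        rw [if_neg (by omega), if_neg (by omega)]
      have hdiv : (t - K * b) / K
          = (t - 1 - K * b) / K + if K ∣ (t - K * b) then 1 else 0 := by
        have h' := Nat.succ_div (a := t - 1 - K * b) (b := K)
        rw [show t - 1 - K * b + 1 = t - K * b by omega] at h'
        exact h'
      by_cases hdvd : K ∣ (t - K * b)
      · rw [if_pos (show StartT K b t from Or.inr (Or.inr ⟨by omega, hdvd⟩)), hR1, hR2, hdiv, if_pos hdvd]
        all_goals omega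
      · have hns : ¬ StartT K b t := by
          intro hS
          rcases hS with hS | ⟨hS, _⟩ | ⟨_, hS⟩
          · omega
          · omega
          · exact hdvd hS
        rw [if_neg hns, hR1, hR2, hdiv, if_neg hdvd]
        all_goals omega


section Coords
variable {K L : ℕ} [NeZero K] [NeZero L] (x : ZMod K) (y : ZMod L) (ε : ZMod K)

lemma ic_cast (v : Vtx K L) : ((ic K L x ε v : ℕ) : ZMod K) = ε * (v.1 - x) := by
  simpa [ic] using (ZMod.natCast_val (ε * (v.1 - x))).trans (ZMod.cast_id _ _)

lemma jc_cast (v : Vtx K L) : ((jc K L y v : ℕ) : ZMod L) = v.2 - y := by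
  simpa [jc] using (ZMod.natCast_val (v.2 - y)).trans (ZMod.cast_id _ _)

lemma ic_snd (v : Vtx K L) (w : ZMod L) : ic K L x ε (v.1, w) = ic K L x ε v := rfl
lemma jc_fst (v : Vtx K L) (w : ZMod K) : jc K L y (w, v.2) = jc K L y v := rfl

lemma ic_sub_eps (hε : ε * ε = 1) (v : Vtx K L) (h1 : 1 ≤ ic K L x ε v) :
    ic K L x ε (v.1 - ε, v.2) = ic K L x ε v - 1 := by
  have key : ε * ((v.1 - ε) - x) = ((ic K L x ε v - 1 : ℕ) : ZMod K) := by
    have hc : ((ic K L x ε v : ℕ) : ZMod K) = ε * (v.1 - x) := ic_cast x ε v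
    have : ((ic K L x ε v - 1 : ℕ) : ZMod K) = ((ic K L x ε v : ℕ) : ZMod K) - 1 := by
      push_cast [Nat.cast_sub h1]; ring
    rw [this, hc]
    have h2 : ε * (v.1 - ε - x) = ε * (v.1 - x) - ε * ε := by ring
    rw [h2, hε]
  show (ε * ((v.1 - ε) - x)).val = _
  rw [key, ZMod.val_cast_of_lt]
  have := ic_lt x ε v
  omega

lemma jc_sub_one (v : Vtx K L) (h1 : 1 ≤ jc K L y v) :
    jc K L y (v.1, v.2 - 1) = jc K L y v - 1 := by
  have key : (v.2 - 1) - y = ((jc K L y v - 1 : ℕ) : ZMod L) := by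
    have hc : ((jc K L y v : ℕ) : ZMod L) = v.2 - y := jc_cast y v
    have : ((jc K L y v - 1 : ℕ) : ZMod L) = ((jc K L y v : ℕ) : ZMod L) - 1 := by
      push_cast [Nat.cast_sub h1]; ring
    rw [this, hc]; ring
  show ((v.2 - 1) - y).val = _
  rw [key, ZMod.val_cast_of_lt]
  have := jc_lt y v
  omega

lemma jc_add_one (v : Vtx K L) (h1 : jc K L y v + 1 < L) :
    jc K L y (v.1, v.2 + 1) = jc K L y v + 1 := by
  have key : (v.2 + 1) - y = ((jc K L y v + 1 : ℕ) : ZMod L) := by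
    have hc : ((jc K L y v : ℕ) : ZMod L) = v.2 - y := jc_cast y v
    push_cast
    rw [hc]; ring
  show ((v.2 + 1) - y).val = _
  rw [key, ZMod.val_cast_of_lt h1]

end Coords

section Steps
variable {K L : ℕ} [NeZero K] [NeZero L] (x : ZMod K) (y : ZMod L) (ε : ZMod K)
    (a b j0 : ℕ)

/-- sum of indicators of already-flipped neighbours -/
noncomputable def nsum (t : ℕ) (v : Vtx K L) : ℝ :=
    (if ordN K L x y ε a b j0 (v.1 + 1, v.2) < t then (1:ℝ) else 0)
  + (if ordN K L x y ε a b j0 (v.1 - 1, v.2) < t then (1:ℝ) else 0)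
  + (if ordN K L x y ε a b j0 (v.1, v.2 + 1) < t then (1:ℝ) else 0)
  + (if ordN K L x y ε a b j0 (v.1, v.2 - 1) < t then (1:ℝ) else 0)

lemma nsum_nonneg (t : ℕ) (v : Vtx K L) : 0 ≤ nsum x y ε a b j0 t v := by
  unfold nsum
  have h1 : ∀ (P : Prop) (_ : Decidable P), (0:ℝ) ≤ if P then (1:ℝ) else 0 := by
    intro P hP; split <;> norm_num
  positivity

/-- one vertical and one horizontal flipped neighbour give `nsum ≥ 2` -/
lemma nsum_ge_two (hε : ε = 1 ∨ ε = -1) (t : ℕ) (v : Vtx K L)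
    (hvert : ordN K L x y ε a b j0 (v.1 - ε, v.2) < t)
    (hhor : (ordN K L x y ε a b j0 (v.1, v.2 - 1) < t) ∨
            (ordN K L x y ε a b j0 (v.1, v.2 + 1) < t)) :
    (2:ℝ) ≤ nsum x y ε a b j0 t v := by
  unfold nsum
  have h1 : ∀ (P : Prop) (_ : Decidable P), (0:ℝ) ≤ if P then (1:ℝ) else 0 := by
    intro P hP; split <;> norm_num
  rcases hε with hε | hε
  · subst hε
    rw [if_pos hvert]
    rcases hhor with hh | hh
    · rw [if_pos hh]
      have := h1 _ (inferInstance : Decidable (ordN K L x y 1 a b j0 (v.1 + 1, v.2) < t))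
      have := h1 _ (inferInstance : Decidable (ordN K L x y 1 a b j0 (v.1, v.2 + 1) < t))
      linarith
    · rw [if_pos hh]
      have := h1 _ (inferInstance : Decidable (ordN K L x y 1 a b j0 (v.1 + 1, v.2) < t))
      have := h1 _ (inferInstance : Decidable (ordN K L x y 1 a b j0 (v.1, v.2 - 1) < t))
      linarith
  · subst hε
    have hv' : v.1 - -1 = v.1 + 1 := by ring
    rw [hv'] at hvert
    rw [if_pos hvert]
    rcases hhor with hh | hh
    · rw [if_pos hh]
      have := h1 _ (inferInstance : Decidable (ordN K L x y (-1) a b j0 (v.1 - 1, v.2) < t))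
      have := h1 _ (inferInstance : Decidable (ordN K L x y (-1) a b j0 (v.1, v.2 + 1) < t))
      linarith
    · rw [if_pos hh]
      have := h1 _ (inferInstance : Decidable (ordN K L x y (-1) a b j0 (v.1 - 1, v.2) < t))
      have := h1 _ (inferInstance : Decidable (ordN K L x y (-1) a b j0 (v.1, v.2 - 1) < t))
      linarith

lemma nsum_ge_one (t : ℕ) (v : Vtx K L)
    (h : (ordN K L x y ε a b j0 (v.1 - ε, v.2) < t ∧ (ε = 1 ∨ ε = -1)) ∨
         ordN K L x y ε a b j0 (v.1, v.2 - 1) < t) :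
    (1:ℝ) ≤ nsum x y ε a b j0 t v := by
  unfold nsum
  have h1 : ∀ (P : Prop) (_ : Decidable P), (0:ℝ) ≤ if P then (1:ℝ) else 0 := by
    intro P hP; split <;> norm_num
  have t1 := h1 _ (inferInstance : Decidable (ordN K L x y ε a b j0 (v.1 + 1, v.2) < t))
  have t2 := h1 _ (inferInstance : Decidable (ordN K L x y ε a b j0 (v.1 - 1, v.2) < t))
  have t3 := h1 _ (inferInstance : Decidable (ordN K L x y ε a b j0 (v.1, v.2 + 1) < t))
  have t4 := h1 _ (inferInstance : Decidable (ordN K L x y ε a b j0 (v.1, v.2 - 1) < t))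
  rcases h with ⟨hvert, hε | hε⟩ | hh
  · subst hε
    rw [if_pos hvert]
    linarith
  · subst hε
    have hv' : v.1 - -1 = v.1 + 1 := by ring
    rw [hv'] at hvert
    rw [if_pos hvert]
    linarith
  · rw [if_pos hh]
    linarith


lemma ordN_eval (v : Vtx K L) : ordN K L x y ε a b j0 v
    = if jc K L y v < b then
        (ic K L x ε v) * b + (if ic K L x ε v = a then bpos b j0 (jc K L y v) else jc K L y v)
      else K * b + (jc K L y v - b) * K + ic K L x ε v := rfl

lemma ordN_left (v : Vtx K L) (h1 : 1 ≤ jc K L y v) :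
    ordN K L x y ε a b j0 (v.1, v.2 - 1)
      = if jc K L y v - 1 < b then
          (ic K L x ε v) * b + (if ic K L x ε v = a then bpos b j0 (jc K L y v - 1) else jc K L y v - 1)
        else K * b + (jc K L y v - 1 - b) * K + ic K L x ε v := by
  rw [ordN_eval, jc_sub_one y v h1, ic_snd]

lemma ordN_right (v : Vtx K L) (h1 : jc K L y v + 1 < L) :
    ordN K L x y ε a b j0 (v.1, v.2 + 1)
      = if jc K L y v + 1 < b then
          (ic K L x ε v) * b + (if ic K L x ε v = a then bpos b j0 (jc K L y v + 1) else jc K L y v + 1)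
        else K * b + (jc K L y v + 1 - b) * K + ic K L x ε v := by
  rw [ordN_eval, jc_add_one y v h1, ic_snd]

lemma ordN_vert (hεε : ε * ε = 1) (v : Vtx K L) (h1 : 1 ≤ ic K L x ε v) :
    ordN K L x y ε a b j0 (v.1 - ε, v.2)
      = if jc K L y v < b then
          (ic K L x ε v - 1) * b + (if ic K L x ε v - 1 = a then bpos b j0 (jc K L y v) else jc K L y v)
        else K * b + (jc K L y v - b) * K + (ic K L x ε v - 1) := by
  rw [ordN_eval, ic_sub_eps x ε hεε v h1, jc_fst]

lemma bpos_succ_lt {b j0 j : ℕ} (hj0 : j0 + 2 ≤ b) (hj : j + 1 ≤ j0) :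
    bpos b j0 (j + 1) < bpos b j0 j := by
  unfold bpos; split <;> split <;> omega

lemma bpos_pred {b j0 j : ℕ} (hj0 : j0 + 2 ≤ b) (hj : j0 < j) (hjb : j < b) :
    bpos b j0 (j - 1) = bpos b j0 j - 1 := by
  unfold bpos
  rw [if_pos (by omega : j0 ≤ j - 1), if_pos (by omega : j0 ≤ j)]
  omega

/-- the main neighbour lower bound -/
lemma nbr_bound (hε : ε = 1 ∨ ε = -1) (ha0 : 0 < a) (hj0 : j0 + 2 ≤ b) (hbL : b ≤ L)
    (t : ℕ) (ht0 : 0 < t) (v : Vtx K L) (hv : ordN K L x y ε a b j0 v = t) :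
    (if StartT K b t then (1:ℝ) else 2) ≤ nsum x y ε a b j0 t v := by
  have hεε : ε * ε = 1 := by rcases hε with h | h <;> rw [h] <;> ring
  have hi := ic_lt x ε v
  have hj := jc_lt y v
  have hK1 : 0 < K := Nat.pos_of_ne_zero (NeZero.ne K)
  have hb1 : 0 < b := by omega
  by_cases hjb : jc K L y v < b
  · -- branch 1
    have hvt : ic K L x ε v * b
        + (if ic K L x ε v = a then bpos b j0 (jc K L y v) else jc K L y v) = t := by
      rw [ordN_eval, if_pos hjb] at hv; exact hv
    have heb : (if ic K L x ε v = a then bpos b j0 (jc K L y v) else jc K L y v) < b :=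
      e_lt_b hj0 hjb
    have htK : t < K * b := by
      have h1 : ic K L x ε v * b + b ≤ K * b := by
        calc ic K L x ε v * b + b = (ic K L x ε v + 1) * b := by ring
          _ ≤ K * b := Nat.mul_le_mul_right b hi
      omega
    by_cases hi0 : ic K L x ε v = 0
    · -- first row: start, left neighbour
      have hia : ic K L x ε v ≠ a := by omega
      have hjt : jc K L y v = t := by
        rw [if_neg hia, hi0] at hvt; simpa using hvt
      have hstart : StartT K b t := Or.inl (hjt ▸ hjb)
      rw [if_pos hstart]
      apply nsum_ge_one
      right
      rw [ordN_left x y ε a b j0 v (by omega), if_pos (by omega : jc K L y v - 1 < b),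
        if_neg hia, hi0]
      omega
    · -- i ≥ 1 : vertical neighbour always available
      have hi1 : 1 ≤ ic K L x ε v := by omega
      have hvert : ordN K L x y ε a b j0 (v.1 - ε, v.2) < t := by
        rw [ordN_vert x y ε a b j0 hεε v hi1, if_pos hjb]
        have he' : (if ic K L x ε v - 1 = a then bpos b j0 (jc K L y v) else jc K L y v) < b :=
          e_lt_b hj0 hjb
        have hmul : (ic K L x ε v - 1) * b + b = ic K L x ε v * b := by
          calc (ic K L x ε v - 1) * b + b = (ic K L x ε v - 1 + 1) * b := by ring
            _ = ic K L x ε v * b := by rw [Nat.sub_add_cancel hi1]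
        omega
      by_cases he0 : (if ic K L x ε v = a then bpos b j0 (jc K L y v) else jc K L y v) = 0
      · -- row start
        have hstart : StartT K b t := by
          right; left
          refine ⟨htK, ⟨ic K L x ε v, ?_⟩⟩
          rw [mul_comm]
          omega
        rw [if_pos hstart]
        exact nsum_ge_one x y ε a b j0 t v (Or.inl ⟨hvert, hε⟩)
      · -- middle of a row : not a start; need two neighbours
        have he1 : 1 ≤ (if ic K L x ε v = a then bpos b j0 (jc K L y v) else jc K L y v) := by
          omega
        have hnstart : ¬ StartT K b t := by
          intro hS
          rcases hS with hS | ⟨_, hS⟩ | ⟨hS, _⟩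
          · have : b ≤ ic K L x ε v * b := Nat.le_mul_of_pos_left b hi1
            omega
          · obtain ⟨c, hc⟩ := hS
            have hmod : t % b
                = (if ic K L x ε v = a then bpos b j0 (jc K L y v) else jc K L y v) := by
              rw [← hvt, Nat.mul_add_mod' _ _ _]
              exact Nat.mod_eq_of_lt heb
            rw [hc] at hmod
            rw [Nat.mul_mod_right] at hmod
            omega
          · omega
        rw [if_neg hnstart]
        apply nsum_ge_two x y ε a b j0 hε t v hvert
        by_cases hia : ic K L x ε v = a
        · rw [if_pos hia] at he1 hvt
          by_cases hjj : j0 ≤ jc K L y v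
          · -- bar row, right of the bar start : left neighbour
            have hjj' : j0 < jc K L y v := by
              rcases Nat.eq_or_lt_of_le hjj with h | h
              · exfalso; rw [← h] at he1; simp [bpos_j0] at he1
              · exact h
            left
            rw [ordN_left x y ε a b j0 v (by omega), if_pos (by omega : jc K L y v - 1 < b),
              if_pos hia, bpos_pred hj0 hjj' hjb]
            omega
          · -- bar row, left of the bar : right neighbour
            push_neg at hjj
            right
            have hjL : jc K L y v + 1 < L := by omega
            rw [ordN_right x y ε a b j0 v hjL, if_pos (by omega : jc K L y v + 1 < b),
              if_pos hia]
            have := bpos_succ_lt hj0 (by omega : jc K L y v + 1 ≤ j0)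
            omega
        · -- ordinary row : left neighbour
          rw [if_neg hia] at he1 hvt
          left
          rw [ordN_left x y ε a b j0 v (by omega), if_pos (by omega : jc K L y v - 1 < b),
            if_neg hia]
          omega
  · -- branch 2 : columns to the right of the strip
    push_neg at hjb
    have hvt : K * b + (jc K L y v - b) * K + ic K L x ε v = t := by
      rw [ordN_eval, if_neg (by omega)] at hv; exact hv
    have hbKb : b ≤ K * b := Nat.le_mul_of_pos_left b hK1
    -- the left neighbour, in both subcases
    have hleft : ordN K L x y ε a b j0 (v.1, v.2 - 1) < t := by
      rcases Nat.eq_or_lt_of_le hjb with hEq | hGt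
      · -- j = b : left neighbour is in the strip
        rw [ordN_left x y ε a b j0 v (by omega), if_pos (by omega : jc K L y v - 1 < b)]
        have hlt : ic K L x ε v * b
            + (if ic K L x ε v = a then bpos b j0 (jc K L y v - 1) else jc K L y v - 1) < K * b := by
          have he' : (if ic K L x ε v = a then bpos b j0 (jc K L y v - 1) else jc K L y v - 1) < b :=
            e_lt_b hj0 (by omega)
          have h1 : ic K L x ε v * b + b ≤ K * b := by
            calc ic K L x ε v * b + b = (ic K L x ε v + 1) * b := by ring
              _ ≤ K * b := Nat.mul_le_mul_right b hi
          omega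
        omega
      · -- j > b
        rw [ordN_left x y ε a b j0 v (by omega), if_neg (by omega : ¬ (jc K L y v - 1 < b))]
        have hK' : (jc K L y v - 1 - b) * K + K = (jc K L y v - b) * K := by
          calc (jc K L y v - 1 - b) * K + K = (jc K L y v - 1 - b + 1) * K := by ring
            _ = (jc K L y v - b) * K := by rw [show jc K L y v - 1 - b + 1 = jc K L y v - b by omega]
        omega
    by_cases hi0 : ic K L x ε v = 0
    · -- column start
      have hstart : StartT K b t := by
        right; right
        constructor
        · omega
        · refine ⟨jc K L y v - b, ?_⟩
          have h' : t - K * b = (jc K L y v - b) * K := by omega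
          rw [h', mul_comm]
      rw [if_pos hstart]
      exact nsum_ge_one x y ε a b j0 t v (Or.inr hleft)
    · have hi1 : 1 ≤ ic K L x ε v := by omega
      have hnstart : ¬ StartT K b t := by
        intro hS
        rcases hS with hS | ⟨hS, _⟩ | ⟨_, hS⟩
        · omega
        · omega
        · obtain ⟨c, hc⟩ := hS
          have hmod : (t - K * b) % K = ic K L x ε v := by
            rw [show t - K * b = (jc K L y v - b) * K + ic K L x ε v by omega]
            rw [Nat.mul_add_mod' _ _ _]
            exact Nat.mod_eq_of_lt hi
          rw [hc, Nat.mul_mod_right] at hmod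
          omega
      rw [if_neg hnstart]
      apply nsum_ge_two x y ε a b j0 hε t v
      · rw [ordN_vert x y ε a b j0 hεε v hi1, if_neg (by omega)]
        omega
      · exact Or.inl hleft


lemma cfg_zero (m : ℕ) : cfgAt K L x y ε a b j0 m 0 = fun _ => m := by
  funext w; simp [cfgAt]

lemma cfg_succ (hε : ε * ε = 1) (hj0 : j0 + 2 ≤ b) (m t : ℕ) (v : Vtx K L)
    (hv : ordN K L x y ε a b j0 v = t) :
    cfgAt K L x y ε a b j0 m (t + 1) = Function.update (cfgAt K L x y ε a b j0 m t) v 1 := by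
  funext w
  by_cases hw : w = v
  · subst hw
    rw [Function.update_self]
    simp [cfgAt, hv]
  · rw [Function.update_of_ne hw]
    have hne : ordN K L x y ε a b j0 w ≠ t := by
      intro hcontra
      exact hw (ordN_inj x y ε a b j0 hε hj0 (hcontra.trans hv.symm))
    simp only [cfgAt]
    by_cases hlt : ordN K L x y ε a b j0 w < t
    · rw [if_pos hlt, if_pos (by omega : ordN K L x y ε a b j0 w < t + 1)]
    · rw [if_neg hlt, if_neg (by omega : ¬ (ordN K L x y ε a b j0 w < t + 1))]

lemma step_energy (hK : 3 ≤ K) (hL : 3 ≤ L) (hε : ε * ε = 1) (hj0 : j0 + 2 ≤ b)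
    (h : ℝ) (m : ℕ) (hm : m ≠ 1) (t : ℕ) (v : Vtx K L)
    (hv : ordN K L x y ε a b j0 v = t) :
    energy K L h (cfgAt K L x y ε a b j0 m (t + 1))
      = energy K L h (cfgAt K L x y ε a b j0 m t) + 4 - h - 2 * nsum x y ε a b j0 t v := by
  have hσv : cfgAt K L x y ε a b j0 m t v = m := by
    simp [cfgAt, hv]
  have hflip := energy_flip hK hL h (cfgAt K L x y ε a b j0 m t) v m 1
    hσv (fun hc => hm hc.symm)
  rw [← cfg_succ x y ε a b j0 hε hj0 m t v hv] at hflip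
  have indm : ∀ w : Vtx K L, (if cfgAt K L x y ε a b j0 m t w = m then (1:ℝ) else 0)
      = 1 - (if ordN K L x y ε a b j0 w < t then (1:ℝ) else 0) := by
    intro w
    simp only [cfgAt]
    by_cases hlt : ordN K L x y ε a b j0 w < t
    · simp [hlt, (Ne.symm hm : (1:ℕ) ≠ m)]
    · simp [hlt]
  have ind1 : ∀ w : Vtx K L, (if cfgAt K L x y ε a b j0 m t w = 1 then (1:ℝ) else 0)
      = (if ordN K L x y ε a b j0 w < t then (1:ℝ) else 0) := by
    intro w
    simp only [cfgAt]
    by_cases hlt : ordN K L x y ε a b j0 w < t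
    · simp [hlt]
    · simp [hlt, hm]
  rw [indm, indm, indm, indm, ind1, ind1, ind1, ind1] at hflip
  rw [if_pos (rfl : (1:ℕ) = 1), if_neg hm] at hflip
  rw [hflip]
  simp only [nsum]
  ring

/-- telescoped energy bound along the construction -/
lemma energy_cfg_bound (hε : ε = 1 ∨ ε = -1) (ha0 : 0 < a) (hj0 : j0 + 2 ≤ b)
    (hbL : b ≤ L) (hK : 3 ≤ K) (hL : 3 ≤ L) (h : ℝ) (hh0 : 0 < h) (m : ℕ) (hm : m ≠ 1) :
    ∀ t, 1 ≤ t → t ≤ K * L →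
      energy K L h (cfgAt K L x y ε a b j0 m t)
        ≤ energy K L h (cfgAt K L x y ε a b j0 m 0) + (4 - h * t + 2 * (Rc K b t : ℝ)) := by
  have hεε : ε * ε = 1 := by rcases hε with h' | h' <;> rw [h'] <;> ring
  have hb1 : 1 ≤ b := by omega
  intro t
  induction t with
  | zero => intro h1 _; omega
  | succ t ih =>
    intro _ hle
    rcases Nat.eq_zero_or_pos t with ht0 | ht0
    · -- first step
      subst ht0
      obtain ⟨v, hv⟩ := ordN_surj x y ε a b j0 hεε hj0 hbL 0 (by positivity)
      have hstep := step_energy x y ε a b j0 hK hL hεε hj0 h m hm 0 v hv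
      have hnn := nsum_nonneg x y ε a b j0 0 v
      have hRc : Rc K b 1 = 0 := by
        unfold Rc
        rw [if_pos hb1]
      rw [hRc]
      push_cast
      linarith
    · have hstep' : energy K L h (cfgAt K L x y ε a b j0 m (t + 1))
          ≤ energy K L h (cfgAt K L x y ε a b j0 m t)
            + (4 - h - 2 * (if StartT K b t then (1:ℝ) else 2)) := by
        obtain ⟨v, hv⟩ := ordN_surj x y ε a b j0 hεε hj0 hbL t (by omega)
        have hstep := step_energy x y ε a b j0 hK hL hεε hj0 h m hm t v hv
        have hnb := nbr_bound x y ε a b j0 hε ha0 hj0 hbL t ht0 v hv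
        linarith
      have hih := ih ht0 (by omega)
      have hRc := Rc_succ (K := K) (b := b) (by omega) hb1 t ht0
      have hcast : (Rc K b (t+1) : ℝ) = (Rc K b t : ℝ) + (if StartT K b t then (1:ℝ) else 0) := by
        rw [hRc]
        by_cases hS : StartT K b t
        · rw [if_pos hS, if_pos hS]
          push_cast
          ring
        · rw [if_neg hS, if_neg hS]
          push_cast
          ring
      rw [hcast]
      by_cases hS : StartT K b t
      · rw [if_pos hS] at hstep' ⊢
        push_cast at hstep' hih ⊢
        linarith
      · rw [if_neg hS] at hstep' ⊢
        push_cast at hstep' hih ⊢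
        linarith

end Steps


/-- the peak bound: the telescoped energy estimate stays below the barrier -/
lemma Rc_peak (s : ℕ) (h : ℝ) (hs3 : 3 ≤ s) (hh0 : 0 < h) (hhs : 2 < h * s)
    (K L : ℕ) (hK : 3 * s ≤ K) (t : ℕ) (h1 : (s - 1) * s + 2 ≤ t) (h2 : t ≤ K * L) :
    (4 : ℝ) - h * t + 2 * (Rc K s t : ℝ)
      < 4 * (s : ℝ) - h * ((s : ℝ) * ((s : ℝ) - 1) + 1) := by
  have hs0 : (0:ℝ) < s := by positivity
  have hsR : (3:ℝ) ≤ (s:ℝ) := by exact_mod_cast hs3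
  have hKR : 3 * (s:ℝ) ≤ (K:ℝ) := by exact_mod_cast hK
  have hts : s < t := by
    have h3 : 2 * s ≤ (s - 1) * s := Nat.mul_le_mul_right s (by omega)
    omega
  by_cases htK : t ≤ K * s
  · -- rows regime
    have hRc : Rc K s t = (s - 1) + (t - 1) / s := by
      unfold Rc
      rw [if_neg (by omega), if_pos htK]
    set k := (t - 1) / s with hk
    have hks : k * s ≤ t - 1 := Nat.div_mul_le_self _ _
    have hka : s - 1 ≤ k := by
      rw [hk]
      rw [Nat.le_div_iff_mul_le (by omega : 0 < s)]
      omega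
    have htR : ((k : ℝ) * s + 1) ≤ (t : ℝ) := by
      have : k * s + 1 ≤ t := by omega
      exact_mod_cast this
    rw [hRc]
    rcases Nat.eq_or_lt_of_le hka with hkc | hkc
    · -- k = s - 1 : still in the quasisquare rows
      have htlow : ((s:ℝ) * ((s:ℝ) - 1) + 2) ≤ (t : ℝ) := by
        have hnat : (s - 1) * s + 2 ≤ t := h1
        have : (((s-1) * s + 2 : ℕ) : ℝ) = (s:ℝ)*((s:ℝ)-1) + 2 := by
          push_cast [Nat.cast_sub (by omega : 1 ≤ s)]
          ring
        rw [← this]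
        exact_mod_cast hnat
      have hcast : ((s - 1 : ℕ) : ℝ) = (s:ℝ) - 1 := by
        push_cast [Nat.cast_sub (by omega : 1 ≤ s)]; ring
      have hkcast : (k : ℝ) = (s:ℝ) - 1 := by rw [← hkc, hcast]
      push_cast
      rw [hcast, hkcast]
      nlinarith [mul_le_mul_of_nonneg_left htlow hh0.le]
    · -- k ≥ s
      have hkR : (s:ℝ) ≤ (k:ℝ) := by
        have : s ≤ k := by omega
        exact_mod_cast this
      have hcast : ((s - 1 : ℕ) : ℝ) = (s:ℝ) - 1 := by
        push_cast [Nat.cast_sub (by omega : 1 ≤ s)]; ring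
      push_cast
      rw [hcast]
      nlinarith [mul_le_mul_of_nonneg_left htR hh0.le,
        mul_nonneg (by linarith : (0:ℝ) ≤ h * s - 2) (by linarith : (0:ℝ) ≤ (k:ℝ) - s)]
  · -- columns regime
    push_neg at htK
    have hRc : Rc K s t = (s + K - 1) + (t - 1 - K * s) / K := by
      unfold Rc
      rw [if_neg (by omega), if_neg (by omega)]
    set q := (t - 1 - K * s) / K with hq
    have hqK : q * K ≤ t - 1 - K * s := Nat.div_mul_le_self _ _
    have htR : ((K : ℝ) * s + (q:ℝ) * K + 1) ≤ (t : ℝ) := by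
      have : K * s + q * K + 1 ≤ t := by omega
      exact_mod_cast this
    have hq0 : (0:ℝ) ≤ (q:ℝ) := by positivity
    rw [hRc]
    have hcast : ((s + K - 1 : ℕ) : ℝ) = (s:ℝ) + K - 1 := by
      push_cast [Nat.cast_sub (by omega : 1 ≤ s + K)]; ring
    push_cast
    rw [hcast]
    nlinarith [mul_le_mul_of_nonneg_left htR hh0.le,
      mul_nonneg (mul_nonneg hh0.le hq0) (by linarith : (0:ℝ) ≤ (K:ℝ) - 3 * s),
      mul_nonneg hq0 (by nlinarith : (0:ℝ) ≤ h * K - 2),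
      mul_nonneg (by linarith : (0:ℝ) ≤ h * s - 2) (by linarith : (0:ℝ) ≤ (K:ℝ) - 3 * s),
      mul_pos (by linarith : (0:ℝ) < h * s - 2) hs0]

section Assembly
variable {K L : ℕ} [NeZero K] [NeZero L] (x : ZMod K) (y : ZMod L) (ε : ZMod K)
    (a b j0 : ℕ)

lemma comm_step (hε : ε * ε = 1) (hj0 : j0 + 2 ≤ b) (hbL : b ≤ L) (m : ℕ) (hm : m ≠ 1)
    (t : ℕ) (ht : t < K * L) :
    Communicates K L (cfgAt K L x y ε a b j0 m t) (cfgAt K L x y ε a b j0 m (t + 1)) := by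
  obtain ⟨v, hv⟩ := ordN_surj x y ε a b j0 hε hj0 hbL t ht
  refine ⟨v, ?_, ?_⟩
  · simp only [cfgAt, hv]
    rw [if_neg (by omega), if_pos (by omega)]
    exact fun hc => hm hc
  · intro w hw
    have hne : ordN K L x y ε a b j0 w ≠ t := by
      intro hcontra
      exact hw (ordN_inj x y ε a b j0 hε hj0 (hcontra.trans hv.symm))
    simp only [cfgAt]
    by_cases hlt : ordN K L x y ε a b j0 w < t
    · rw [if_pos hlt, if_pos (by omega)]
    · rw [if_neg hlt, if_neg (by omega)]

/-- the core construction: a path from the protocritical droplet configuration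
to the all-ones configuration staying strictly below the barrier -/
lemma core_path (s q m : ℕ) (h : ℝ) (hs3 : 3 ≤ s) (hh0 : 0 < h) (hhs : 2 < h * s)
    (hK : 3 * s ≤ K) (hsL : s ≤ L) (hL3 : 3 ≤ L) (hm2 : 2 ≤ m) (hmq : m ≤ q)
    (hε : ε = 1 ∨ ε = -1) (hj0 : j0 + 2 ≤ s) :
    ∃ ω, IsPath q K L (cfgAt K L x y ε (s-1) s j0 m ((s-1)*s + 2)) (const K L 1) ω ∧
      height K L h ω < (4 * (s : ℝ) - h * ((s : ℝ) * ((s : ℝ) - 1) + 1))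
        + energy K L h (const K L m) := by
  have hεε : ε * ε = 1 := by rcases hε with h' | h' <;> rw [h'] <;> ring
  have hK3 : 3 ≤ K := by omega
  have hm1 : m ≠ 1 := by omega
  have ha0 : 0 < s - 1 := by omega
  have hbL : s ≤ L := hsL
  set n0 := (s - 1) * s + 2 with hn0
  set N := K * L with hN
  have hn0N : n0 ≤ N := by
    have h1 : (s - 1) * s ≤ s * s := Nat.mul_le_mul (by omega) (by omega)
    have h2 : 3 * (s * s) ≤ K * L := by
      calc 3 * (s * s) = (3 * s) * s := by ring
        _ ≤ K * L := Nat.mul_le_mul hK hsL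
    have h3 : 9 ≤ s * s := by
      calc 9 = 3 * 3 := rfl
        _ ≤ s * s := Nat.mul_le_mul hs3 hs3
    omega
  set f : ℕ → Cfg K L := fun k => cfgAt K L x y ε (s-1) s j0 m (n0 + k) with hf
  refine ⟨(List.range (N - n0 + 1)).map f, ⟨?_, ?_, ?_, ?_⟩, ?_⟩
  · -- head
    rw [List.range_succ_eq_map, List.map_cons, List.head?_cons]
  · -- last
    rw [List.range_succ, List.map_append, List.map_singleton, List.getLast?_concat]
    have hlast : f (N - n0) = const K L 1 := by
      funext v
      simp only [hf, cfgAt]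
      rw [if_pos]
      · rfl
      · have := ordN_lt x y ε (s-1) s j0 hj0 hbL v
        omega
    rw [hlast]
  · -- chain
    show List.IsChain _ _
    rw [List.isChain_map]
    rw [show N - n0 + 1 = (N - n0) + 1 from rfl, List.isChain_range_succ]
    intro k hk
    simp only [hf]
    rw [show n0 + (k + 1) = n0 + k + 1 by ring]
    exact comm_step x y ε (s-1) s j0 hεε hj0 hbL m hm1 (n0 + k) (by omega)
  · -- validity
    intro η hη
    simp only [List.mem_map] at hη
    obtain ⟨kk, _, hkη⟩ := hη
    intro v
    rw [← hkη]
    simp only [hf, cfgAt]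
    split
    · omega
    · omega
  · -- height bound
    have hfin : (energy K L h '' {η | η ∈ (List.range (N - n0 + 1)).map f}).Finite :=
      Set.Finite.image _ (List.finite_toSet _)
    have hne : (energy K L h '' {η | η ∈ (List.range (N - n0 + 1)).map f}).Nonempty := by
      refine ⟨energy K L h (f 0), ⟨f 0, ?_, rfl⟩⟩
      simp only [Set.mem_setOf_eq, List.mem_map, List.mem_range]
      exact ⟨0, by omega, rfl⟩
    have hmem := Set.Nonempty.csSup_mem hne hfin
    unfold height
    obtain ⟨η, hη, hsup⟩ := hmem
    rw [← hsup]
    simp only [Set.mem_setOf_eq, List.mem_map, List.mem_range] at hη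
    obtain ⟨kk, hkk, hkη⟩ := hη
    rw [← hkη]
    have hbound := energy_cfg_bound x y ε (s-1) s j0 hε ha0 hj0 hbL hK3 hL3 h hh0 m hm1
      (n0 + kk) (by omega) (by omega)
    have hpeak := Rc_peak s h hs3 hh0 hhs K L hK (n0 + kk) (by omega) (by omega)
    have hc0 : cfgAt K L x y ε (s-1) s j0 m 0 = const K L m := by
      funext w; simp [cfgAt, const]
    rw [hc0] at hbound
    simp only [hf]
    linarith

lemma ord_lt_n0_iff (hε : ε * ε = 1) (ha0 : 0 < a) (haK : a + 1 ≤ K) (hb3 : 3 ≤ b)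
    (hj0 : j0 + 2 ≤ b) (hbL : b ≤ L) (v : Vtx K L) :
    ordN K L x y ε a b j0 v < a * b + 2 ↔
      ((∃ i j : ℕ, i < a ∧ j < b ∧ v = (x + ε * (i : ZMod K), y + (j : ZMod L))) ∨
       (∃ t : ℕ, t < 2 ∧ v = (x + ε * (a : ZMod K), y + ((j0 + t : ℕ) : ZMod L)))) := by
  constructor
  · intro hlt
    have hi := ic_lt x ε v
    have hj := jc_lt y v
    have hjb : jc K L y v < b := by
      by_contra hc
      rw [ordN_eval, if_neg hc] at hlt
      have : (a + 1) * b ≤ K * b := Nat.mul_le_mul_right b haK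
      nlinarith
    rw [ordN_eval, if_pos hjb] at hlt
    rcases lt_trichotomy (ic K L x ε v) a with hia | hia | hia
    · left
      refine ⟨ic K L x ε v, jc K L y v, hia, hjb, ?_⟩
      have h1 := fst_eq x ε hε v
      have h2 := snd_eq y v
      exact Prod.ext h1 h2
    · right
      rw [if_pos hia, hia] at hlt
      have hbp : bpos b j0 (jc K L y v) < 2 := by omega
      rcases (by omega : bpos b j0 (jc K L y v) = 0 ∨ bpos b j0 (jc K L y v) = 1) with h0 | h0
      · refine ⟨0, by omega, ?_⟩
        have hjj : jc K L y v = j0 + 0 := by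
          rw [Nat.add_zero]; exact bpos_eq_zero hj0 h0
        have h1 := fst_eq x ε hε v
        have h2 := snd_eq y v
        rw [hia] at h1
        rw [hjj] at h2
        exact Prod.ext h1 h2
      · refine ⟨1, by omega, ?_⟩
        have hjj : jc K L y v = j0 + 1 := bpos_eq_one hj0 h0
        have h1 := fst_eq x ε hε v
        have h2 := snd_eq y v
        rw [hia] at h1
        rw [hjj] at h2
        exact Prod.ext h1 h2
    · exfalso
      have he := e_lt_b (a := a) (i := ic K L x ε v) (j0 := j0) hj0 hjb
      have h1 : (a + 1) * b ≤ ic K L x ε v * b := Nat.mul_le_mul_right b hia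
      have h2 : a * b + b = (a + 1) * b := by ring
      omega
  · intro hv
    rcases hv with ⟨i, j, hia, hjb, hv⟩ | ⟨t, ht, hv⟩
    · have hic : ic K L x ε v = i := by rw [hv]; exact ic_mk x ε hε i (by omega) _
      have hjc : jc K L y v = j := by rw [hv]; exact jc_mk y j (by omega) _
      rw [ordN_eval, hic, hjc, if_pos hjb, if_neg (by omega)]
      calc i * b + j < i * b + b := by omega
        _ = (i + 1) * b := by ring
        _ ≤ a * b := Nat.mul_le_mul_right b (by omega)
        _ < a * b + 2 := by omega
    · have hic : ic K L x ε v = a := by rw [hv]; exact ic_mk x ε hε a (by omega) _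
      have hjc : jc K L y v = j0 + t := by
        rw [hv]; exact jc_mk y (j0 + t) (by omega) _
      rw [ordN_eval, hic, hjc, if_pos (by omega), if_pos rfl]
      rcases (by omega : t = 0 ∨ t = 1) with h0 | h0
      · subst h0; rw [Nat.add_zero, bpos_j0]; omega
      · subst h0; rw [bpos_j0']; omega

/-- case of the bar below the quasisquare -/
lemma case1_path (s q m : ℕ) (h : ℝ) (hs3 : 3 ≤ s) (hh0 : 0 < h) (hhs : 2 < h * s)
    (hK : 3 * s ≤ K) (hsL : s ≤ L) (hL3 : 3 ≤ L) (hm2 : 2 ≤ m) (hmq : m ≤ q)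
    (x : ZMod K) (y : ZMod L) (j0 : ℕ) (hj0 : j0 + 2 ≤ s) (σ : Cfg K L)
    (hin : ∀ v ∈ rect K L x y (s-1) s ∪
      hbar K L (x + ((s-1 : ℕ) : ZMod K)) (y + (j0 : ZMod L)) 2, σ v = 1)
    (hout : ∀ v ∉ rect K L x y (s-1) s ∪
      hbar K L (x + ((s-1 : ℕ) : ZMod K)) (y + (j0 : ZMod L)) 2, σ v = m) :
    ∃ ω, IsPath q K L σ (const K L 1) ω ∧
      height K L h ω < (4 * (s : ℝ) - h * ((s : ℝ) * ((s : ℝ) - 1) + 1))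
        + energy K L h (const K L m) := by
  have hK3 : 3 ≤ K := by omega
  have hAiff : ∀ v : Vtx K L, (v ∈ rect K L x y (s-1) s ∪
      hbar K L (x + ((s-1 : ℕ) : ZMod K)) (y + (j0 : ZMod L)) 2)
      ↔ ordN K L x y 1 (s-1) s j0 v < (s-1) * s + 2 := by
    intro v
    rw [ord_lt_n0_iff x y 1 (s-1) s j0 (by ring) (by omega) (by omega) (by omega) hj0 hsL]
    simp only [Set.mem_union, rect, hbar, Set.mem_setOf_eq, one_mul]
    constructor
    · rintro (⟨i, j, hi, hj, hv⟩ | ⟨t, ht, hv⟩)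
      · exact Or.inl ⟨i, j, hi, hj, hv⟩
      · refine Or.inr ⟨t, ht, ?_⟩
        rw [hv]
        have : ((j0 + t : ℕ) : ZMod L) = (j0 : ZMod L) + (t : ZMod L) := by push_cast; ring
        rw [this, add_assoc]
    · rintro (⟨i, j, hi, hj, hv⟩ | ⟨t, ht, hv⟩)
      · exact Or.inl ⟨i, j, hi, hj, hv⟩
      · refine Or.inr ⟨t, ht, ?_⟩
        rw [hv]
        have : ((j0 + t : ℕ) : ZMod L) = (j0 : ZMod L) + (t : ZMod L) := by push_cast; ring
        rw [this, add_assoc]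
  have hσ : σ = cfgAt K L x y 1 (s-1) s j0 m ((s-1) * s + 2) := by
    funext v
    by_cases hv : v ∈ rect K L x y (s-1) s ∪
      hbar K L (x + ((s-1 : ℕ) : ZMod K)) (y + (j0 : ZMod L)) 2
    · rw [hin v hv]
      simp only [cfgAt]
      rw [if_pos ((hAiff v).mp hv)]
    · rw [hout v hv]
      simp only [cfgAt]
      rw [if_neg (fun hc => hv ((hAiff v).mpr hc))]
  rw [hσ]
  exact core_path x y 1 j0 s q m h hs3 hh0 hhs hK hsL hL3 hm2 hmq (Or.inl rfl) hj0

/-- case of the bar above the quasisquare -/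
lemma case2_path (s q m : ℕ) (h : ℝ) (hs3 : 3 ≤ s) (hh0 : 0 < h) (hhs : 2 < h * s)
    (hK : 3 * s ≤ K) (hsL : s ≤ L) (hL3 : 3 ≤ L) (hm2 : 2 ≤ m) (hmq : m ≤ q)
    (x : ZMod K) (y : ZMod L) (j0 : ℕ) (hj0 : j0 + 2 ≤ s) (σ : Cfg K L)
    (hin : ∀ v ∈ rect K L x y (s-1) s ∪
      hbar K L (x - 1) (y + (j0 : ZMod L)) 2, σ v = 1)
    (hout : ∀ v ∉ rect K L x y (s-1) s ∪
      hbar K L (x - 1) (y + (j0 : ZMod L)) 2, σ v = m) :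
    ∃ ω, IsPath q K L σ (const K L 1) ω ∧
      height K L h ω < (4 * (s : ℝ) - h * ((s : ℝ) * ((s : ℝ) - 1) + 1))
        + energy K L h (const K L m) := by
  have hK3 : 3 ≤ K := by omega
  set xh : ZMod K := x + ((s - 2 : ℕ) : ZMod K) with hxh
  have hc1 : ∀ i : ℕ, i < s - 1 → xh + (-1) * ((s - 2 - i : ℕ) : ZMod K) = x + (i : ZMod K) := by
    intro i hi
    have : ((s - 2 - i : ℕ) : ZMod K) = ((s - 2 : ℕ) : ZMod K) - (i : ZMod K) := by
      push_cast [Nat.cast_sub (by omega : i ≤ s - 2)]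
      ring
    rw [hxh, this]
    ring
  have hc2 : xh + (-1) * ((s - 1 : ℕ) : ZMod K) = x - 1 := by
    have : ((s - 2 : ℕ) : ZMod K) = ((s - 1 : ℕ) : ZMod K) - 1 := by
      push_cast [Nat.cast_sub (by omega : 1 ≤ s - 1), Nat.cast_sub (by omega : 2 ≤ s),
        Nat.cast_sub (by omega : 1 ≤ s)]
      ring
    rw [hxh, this]
    ring
  have hAiff : ∀ v : Vtx K L, (v ∈ rect K L x y (s-1) s ∪
      hbar K L (x - 1) (y + (j0 : ZMod L)) 2)
      ↔ ordN K L xh y (-1) (s-1) s j0 v < (s-1) * s + 2 := by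
    intro v
    rw [ord_lt_n0_iff xh y (-1) (s-1) s j0 (by ring) (by omega) (by omega) (by omega) hj0 hsL]
    simp only [Set.mem_union, rect, hbar, Set.mem_setOf_eq]
    constructor
    · rintro (⟨i, j, hi, hj, hv⟩ | ⟨t, ht, hv⟩)
      · refine Or.inl ⟨s - 2 - i, j, by omega, hj, ?_⟩
        rw [hv, hc1 i hi]
      · refine Or.inr ⟨t, ht, ?_⟩
        rw [hv, hc2]
        have : ((j0 + t : ℕ) : ZMod L) = (j0 : ZMod L) + (t : ZMod L) := by push_cast; ring
        rw [this, add_assoc]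
    · rintro (⟨i, j, hi, hj, hv⟩ | ⟨t, ht, hv⟩)
      · refine Or.inl ⟨s - 2 - i, j, by omega, hj, ?_⟩
        have hx : xh + (-1) * (i : ZMod K) = x + ((s - 2 - i : ℕ) : ZMod K) := by
          have h3 := hc1 (s - 2 - i) (by omega)
          rw [show s - 2 - (s - 2 - i) = i by omega] at h3
          exact h3
        rw [hv, hx]
      · refine Or.inr ⟨t, ht, ?_⟩
        rw [hv, hc2]
        have hsnd : ((j0 + t : ℕ) : ZMod L) = (j0 : ZMod L) + (t : ZMod L) := by push_cast; ring
        rw [hsnd, ← add_assoc]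
  have hσ : σ = cfgAt K L xh y (-1) (s-1) s j0 m ((s-1) * s + 2) := by
    funext v
    by_cases hv : v ∈ rect K L x y (s-1) s ∪ hbar K L (x - 1) (y + (j0 : ZMod L)) 2
    · rw [hin v hv]
      simp only [cfgAt]
      rw [if_pos ((hAiff v).mp hv)]
    · rw [hout v hv]
      simp only [cfgAt]
      rw [if_neg (fun hc => hv ((hAiff v).mpr hc))]
  rw [hσ]
  exact core_path xh y (-1) j0 s q m h hs3 hh0 hhs hK hsL hL3 hm2 hmq (Or.inr rfl) hj0

end Assembly


section Transpose
variable {K L : ℕ} [NeZero K] [NeZero L]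

/-- transposition of configurations -/
def trc (σ : Cfg K L) : Cfg L K := fun w => σ (w.2, w.1)

lemma trc_trc (σ : Cfg K L) : trc (trc σ) = σ := rfl

lemma energy_trc (h : ℝ) (σ : Cfg K L) : energy L K h (trc σ) = energy K L h σ := by
  unfold energy
  have h1 : ∑ w : Vtx L K, ((if trc σ w = trc σ (w.1 + 1, w.2) then (1:ℝ) else 0)
        + (if trc σ w = trc σ (w.1, w.2 + 1) then (1:ℝ) else 0))
      = ∑ v : Vtx K L, ((if σ v = σ (v.1 + 1, v.2) then (1:ℝ) else 0)
        + (if σ v = σ (v.1, v.2 + 1) then (1:ℝ) else 0)) := by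
    apply Fintype.sum_equiv (Equiv.prodComm (ZMod L) (ZMod K))
    intro w
    show ((if σ (w.2, w.1) = σ (w.2, w.1 + 1) then (1:ℝ) else 0)
        + (if σ (w.2, w.1) = σ (w.2 + 1, w.1) then (1:ℝ) else 0)) = _
    exact add_comm _ _
  have h2 : ∑ w : Vtx L K, (if trc σ w = 1 then (1:ℝ) else 0)
      = ∑ v : Vtx K L, (if σ v = 1 then (1:ℝ) else 0) := by
    apply Fintype.sum_equiv (Equiv.prodComm (ZMod L) (ZMod K))
    intro w
    rfl
  rw [h1, h2]

lemma comm_trc {σ η : Cfg K L} (hc : Communicates K L σ η) :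
    Communicates L K (trc σ) (trc η) := by
  obtain ⟨v, hv, hrest⟩ := hc
  refine ⟨(v.2, v.1), hv, ?_⟩
  intro w hw
  apply hrest (w.2, w.1)
  intro hcontra
  apply hw
  rw [← hcontra]

lemma path_trc (q : ℕ) (σ' τ' : Cfg L K) (ω' : List (Cfg L K))
    (hp : IsPath q L K σ' τ' ω') :
    IsPath q K L (trc σ') (trc τ') (ω'.map trc) := by
  obtain ⟨hhead, hlast, hchain, hconf⟩ := hp
  refine ⟨?_, ?_, ?_, ?_⟩
  · rw [List.head?_map, hhead]; rfl
  · rw [List.getLast?_map, hlast]; rfl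
  · show List.IsChain _ _
    rw [List.isChain_map]
    exact List.IsChain.imp (fun a b hab => comm_trc hab) hchain
  · intro η hη
    rw [List.mem_map] at hη
    obtain ⟨ρ, hρ, hρη⟩ := hη
    intro v
    rw [← hρη]
    exact hconf ρ hρ (v.2, v.1)

lemma height_trc (h : ℝ) (ω' : List (Cfg L K)) :
    height K L h (ω'.map trc) = height L K h ω' := by
  unfold height
  congr 1
  ext r
  constructor
  · rintro ⟨η, hη, hηr⟩
    simp only [Set.mem_setOf_eq, List.mem_map] at hη
    obtain ⟨ρ, hρ, hρη⟩ := hη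
    refine ⟨ρ, hρ, ?_⟩
    rw [← hηr, ← hρη]
    exact (energy_trc h ρ).symm ▸ rfl
  · rintro ⟨ρ, hρ, hρr⟩
    refine ⟨trc ρ, ?_, ?_⟩
    · simp only [Set.mem_setOf_eq, List.mem_map]
      exact ⟨ρ, hρ, rfl⟩
    · rw [energy_trc h ρ]
      exact hρr

end Transpose


section Swap
variable {K L : ℕ} [NeZero K] [NeZero L]

lemma swap_rect (x : ZMod K) (y : ZMod L) (p r : ℕ) (w : Vtx L K) :
    w ∈ rect L K y x p r ↔ (w.2, w.1) ∈ rect K L x y r p := by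
  simp only [rect, Set.mem_setOf_eq]
  constructor
  · rintro ⟨i, j, hi, hj, hw⟩
    exact ⟨j, i, hj, hi, by rw [hw]⟩
  · rintro ⟨i, j, hi, hj, hw⟩
    refine ⟨j, i, hj, hi, ?_⟩
    have h1 : w.2 = x + (i : ZMod K) := congrArg Prod.fst hw
    have h2 : w.1 = y + (j : ZMod L) := congrArg Prod.snd hw
    exact Prod.ext h2 h1

lemma swap_hbar (x0 : ZMod K) (y0 : ZMod L) (l : ℕ) (w : Vtx L K) :
    w ∈ hbar L K y0 x0 l ↔ (w.2, w.1) ∈ vbar K L x0 y0 l := by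
  simp only [hbar, vbar, Set.mem_setOf_eq]
  constructor
  · rintro ⟨j, hj, hw⟩
    exact ⟨j, hj, by rw [hw]⟩
  · rintro ⟨j, hj, hw⟩
    refine ⟨j, hj, ?_⟩
    have h1 : w.2 = x0 + (j : ZMod K) := congrArg Prod.fst hw
    have h2 : w.1 = y0 := congrArg Prod.snd hw
    exact Prod.ext h2 h1

end Swap

/-- from any `σ ∈ B̄²_{ℓ*−1,ℓ*}(m,1)` there is a path to `𝟏` whose
maximal energy is `< 4ℓ* − h(ℓ*(ℓ*−1)+1) + H(𝐦)`. -/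
theorem path_from_protocritical_to_one (q K L : ℕ) [NeZero K] [NeZero L] (h : ℝ)
    (hq : 2 < q) (hh0 : 0 < h) (hh1 : h < 1)
    (hhint : ¬ ∃ n : ℤ, (2 : ℝ) / h = (n : ℝ))
    (hK : 3 * ellStar h ≤ K) (hKL : K ≤ L) :
    ∀ m, 2 ≤ m → m ≤ q →
      ∀ σ ∈ Bbar K L (ellStar h - 1) (ellStar h) 2 m 1,
        ∃ ω, IsPath q K L σ (const K L 1) ω ∧
          height K L h ω < Gamma h + energy K L h (const K L m) := by
  intro m hm2 hmq σ hσ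
  have hs3 : 3 ≤ ellStar h := by
    have h2 : (2:ℝ) < 2 / h := by
      rw [lt_div_iff₀ hh0]; nlinarith
    have h3 : (2:ℕ) < ⌈(2:ℝ)/h⌉₊ := Nat.lt_ceil.mpr (by exact_mod_cast h2)
    exact h3
  have hles : (2:ℝ)/h ≤ (ellStar h : ℝ) := by
    simpa [ellStar] using Nat.le_ceil ((2:ℝ)/h)
  have hhs2 : 2 ≤ h * (ellStar h : ℝ) := by
    rw [div_le_iff₀ hh0] at hles
    linarith
  have hhs : 2 < h * (ellStar h : ℝ) := by
    rcases lt_or_eq_of_le hhs2 with hlt | heq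
    · exact hlt
    · exfalso
      apply hhint
      refine ⟨(ellStar h : ℤ), ?_⟩
      rw [div_eq_iff (ne_of_gt hh0)]
      push_cast
      linarith
  have hGamma : Gamma h = 4 * (ellStar h : ℝ)
      - h * ((ellStar h : ℝ) * ((ellStar h : ℝ) - 1) + 1) := rfl
  have hsL : ellStar h ≤ L := by omega
  have hL3 : 3 ≤ L := by omega
  have hKs : ellStar h ≤ K := by omega
  have hK3 : 3 ≤ K := by omega
  have hKL' : 3 * ellStar h ≤ L := by omega
  obtain ⟨A, ⟨x, y, j0, hj0, hcase⟩, hin, hout⟩ := hσ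
  rw [hGamma]
  rcases hcase with h1 | h2 | h3 | h4
  · -- bar below
    subst h1
    exact case1_path (ellStar h) q m h hs3 hh0 hhs hK hsL hL3 hm2 hmq x y j0 hj0 σ hin hout
  · -- bar above
    subst h2
    exact case2_path (ellStar h) q m h hs3 hh0 hhs hK hsL hL3 hm2 hmq x y j0 hj0 σ hin hout
  · -- vertical bar, right
    subst h3
    have hin' : ∀ w ∈ rect L K y x (ellStar h - 1) (ellStar h) ∪
        hbar L K (y + ((ellStar h - 1 : ℕ) : ZMod L)) (x + (j0 : ZMod K)) 2, trc σ w = 1 := by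
      intro w hw
      apply hin
      rcases hw with hw | hw
      · exact Or.inl ((swap_rect x y _ _ w).mp hw)
      · exact Or.inr ((swap_hbar _ _ _ w).mp hw)
    have hout' : ∀ w ∉ rect L K y x (ellStar h - 1) (ellStar h) ∪
        hbar L K (y + ((ellStar h - 1 : ℕ) : ZMod L)) (x + (j0 : ZMod K)) 2, trc σ w = m := by
      intro w hw
      apply hout
      intro hc
      apply hw
      rcases hc with hc | hc
      · exact Or.inl ((swap_rect x y _ _ w).mpr hc)
      · exact Or.inr ((swap_hbar _ _ _ w).mpr hc)
    obtain ⟨ω', hp', hh'⟩ := case1_path (K := L) (L := K) (ellStar h) q m h hs3 hh0 hhs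
      hKL' hKs hK3 hm2 hmq y x j0 hj0 (trc σ) hin' hout'
    refine ⟨ω'.map trc, ?_, ?_⟩
    · have hp'' := path_trc q (trc σ) (const L K 1) ω' hp'
      rw [trc_trc] at hp''
      exact hp''
    · rw [height_trc]
      have he : energy L K h (const L K m) = energy K L h (const K L m) :=
        energy_trc (K := K) (L := L) h (const K L m)
      linarith
  · -- vertical bar, left
    subst h4
    have hin' : ∀ w ∈ rect L K y x (ellStar h - 1) (ellStar h) ∪
        hbar L K (y - 1) (x + (j0 : ZMod K)) 2, trc σ w = 1 := by
      intro w hw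
      apply hin
      rcases hw with hw | hw
      · exact Or.inl ((swap_rect x y _ _ w).mp hw)
      · exact Or.inr ((swap_hbar _ _ _ w).mp hw)
    have hout' : ∀ w ∉ rect L K y x (ellStar h - 1) (ellStar h) ∪
        hbar L K (y - 1) (x + (j0 : ZMod K)) 2, trc σ w = m := by
      intro w hw
      apply hout
      intro hc
      apply hw
      rcases hc with hc | hc
      · exact Or.inl ((swap_rect x y _ _ w).mpr hc)
      · exact Or.inr ((swap_hbar _ _ _ w).mpr hc)
    obtain ⟨ω', hp', hh'⟩ := case2_path (K := L) (L := K) (ellStar h) q m h hs3 hh0 hhs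
      hKL' hKs hK3 hm2 hmq y x j0 hj0 (trc σ) hin' hout'
    refine ⟨ω'.map trc, ?_, ?_⟩
    · have hp'' := path_trc q (trc σ) (const L K 1) ω' hp'
      rw [trc_trc] at hp''
      exact hp''
    · rw [height_trc]
      have he : energy L K h (const L K m) = energy K L h (const K L m) :=
        energy_trc (K := K) (L := L) h (const K L m)
      linarith

end PottsPos
end

section
/- For every m ∈ {2,…,q}, if η ∈ B̄^1_{ℓ*−1,ℓ*}(m,1) and η̄ is any configuration differing from η at exactly one vertex, then H(η̄) ≠ H(η); that is, every single-spin update from η strictly increases or strictly decreases the energy. -/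
/-!
Metastability for the q-state Potts model with positive external magnetic field
on the K × L torus, under Glauber (single-spin-flip) dynamics.
-/

namespace PottsPos

lemma hbar_one (K L : ℕ) (x : ZMod K) (y : ZMod L) : hbar K L x y 1 = {(x, y)} := by
  ext v
  simp only [hbar, Set.mem_setOf_eq, Set.mem_singleton_iff]
  constructor
  · rintro ⟨j, hj, rfl⟩
    interval_cases j
    simp
  · rintro rfl
    exact ⟨0, by norm_num, by simp⟩

lemma vbar_one (K L : ℕ) (x : ZMod K) (y : ZMod L) : vbar K L x y 1 = {(x, y)} := by
  ext v
  simp only [vbar, Set.mem_setOf_eq, Set.mem_singleton_iff]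
  constructor
  · rintro ⟨j, hj, rfl⟩
    interval_cases j
    simp
  · rintro rfl
    exact ⟨0, by norm_num, by simp⟩

lemma zmod_onedim (n d : ℕ) [NeZero n] (hd : d + 1 < n) (z : ZMod n)
    (h1 : (z + 1).val < d) (h2 : (z - 1).val < d) : z.val < d := by
  set b := (z - 1).val with hb
  have e1 : ((b : ℕ) : ZMod n) = z - 1 := ZMod.natCast_rightInverse (z - 1)
  have hz : z = ((b + 1 : ℕ) : ZMod n) := by push_cast; linear_combination -e1
  have hbd : b < d := h2
  have hv1 : z.val = b + 1 := by rw [hz]; exact ZMod.val_cast_of_lt (by omega)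
  have hz2 : z + 1 = ((b + 2 : ℕ) : ZMod n) := by rw [hz]; push_cast; ring
  have hv2 : (z + 1).val = b + 2 := by rw [hz2]; exact ZMod.val_cast_of_lt (by omega)
  omega

lemma mem_rect_iff (K L : ℕ) [NeZero K] [NeZero L] (x : ZMod K) (y : ZMod L)
    (p r : ℕ) (hp : p ≤ K) (hr : r ≤ L) (w : Vtx K L) :
    w ∈ rect K L x y p r ↔ (w.1 - x).val < p ∧ (w.2 - y).val < r := by
  constructor
  · rintro ⟨i, j, hi, hj, rfl⟩
    constructor
    · simpa using (by rw [show x + (i : ZMod K) - x = (i : ZMod K) by ring,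
        ZMod.val_cast_of_lt (by omega)]; exact hi :
        ((x + (i : ZMod K), y + (j : ZMod L)).1 - x).val < p)
    · simpa using (by rw [show y + (j : ZMod L) - y = (j : ZMod L) by ring,
        ZMod.val_cast_of_lt (by omega)]; exact hj :
        ((x + (i : ZMod K), y + (j : ZMod L)).2 - y).val < r)
  · rintro ⟨h1, h2⟩
    refine ⟨(w.1 - x).val, (w.2 - y).val, h1, h2, ?_⟩
    have e1 : (((w.1 - x).val : ℕ) : ZMod K) = w.1 - x := ZMod.natCast_rightInverse _
    have e2 : (((w.2 - y).val : ℕ) : ZMod L) = w.2 - y := ZMod.natCast_rightInverse _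
    rw [e1, e2]
    ext <;> simp

lemma no_hole (K L p r : ℕ) [NeZero K] [NeZero L]
    (hpK : p + 1 < K) (hrL : r + 1 < L)
    (x : ZMod K) (y : ZMod L) (c : Vtx K L) (vp : ZMod K) (vt : ZMod L)
    (h1 : (vp + 1, vt) ∈ rect K L x y p r ∪ {c})
    (h2 : (vp - 1, vt) ∈ rect K L x y p r ∪ {c})
    (h3 : (vp, vt + 1) ∈ rect K L x y p r ∪ {c})
    (h4 : (vp, vt - 1) ∈ rect K L x y p r ∪ {c}) :
    (vp, vt) ∈ rect K L x y p r := by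
  have hK1 : (1 : ZMod K) ≠ 0 := by
    haveI : Fact (1 < K) := ⟨by omega⟩; exact one_ne_zero
  have hL1 : (1 : ZMod L) ≠ 0 := by
    haveI : Fact (1 < L) := ⟨by omega⟩; exact one_ne_zero
  have hneK1 : vp + 1 ≠ vp := fun hc => hK1 (by linear_combination hc)
  have hneK2 : vp - 1 ≠ vp := fun hc => hK1 (by linear_combination -hc)
  have hneL1 : vt + 1 ≠ vt := fun hc => hL1 (by linear_combination hc)
  have hneL2 : vt - 1 ≠ vt := fun hc => hL1 (by linear_combination -hc)
  rw [mem_rect_iff K L x y p r (by omega) (by omega)]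
  by_cases hc : (vp, vt + 1) = c ∨ (vp, vt - 1) = c
  · -- then both horizontal neighbours are in rect
    have g1 : (vp + 1, vt) ∈ rect K L x y p r := by
      rcases h1 with h | h
      · exact h
      · exfalso
        rcases hc with hc | hc <;>
          exact hneK1 (congrArg Prod.fst (h.trans hc.symm))
    have g2 : (vp - 1, vt) ∈ rect K L x y p r := by
      rcases h2 with h | h
      · exact h
      · exfalso
        rcases hc with hc | hc <;>
          exact hneK2 (congrArg Prod.fst (h.trans hc.symm))
    rw [mem_rect_iff K L x y p r (by omega) (by omega)] at g1 g2
    simp only at g1 g2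
    refine ⟨zmod_onedim K p hpK (vp - x) ?_ ?_, g1.2⟩
    · rw [show vp - x + 1 = vp + 1 - x by ring]; exact g1.1
    · rw [show vp - x - 1 = vp - 1 - x by ring]; exact g2.1
  · push_neg at hc
    have g3 : (vp, vt + 1) ∈ rect K L x y p r := h3.resolve_right hc.1
    have g4 : (vp, vt - 1) ∈ rect K L x y p r := h4.resolve_right hc.2
    rw [mem_rect_iff K L x y p r (by omega) (by omega)] at g3 g4
    simp only at g3 g4
    refine ⟨g3.1, zmod_onedim L r hrL (vt - y) ?_ ?_⟩
    · rw [show vt - y + 1 = vt + 1 - y by ring]; exact g3.2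
    · rw [show vt - y - 1 = vt - 1 - y by ring]; exact g4.2


lemma diff_sum {α : Type*} [Fintype α] [DecidableEq α] (F G : α → ℝ) (T : Finset α)
    (hFG : ∀ w ∉ T, F w = G w) :
    (∑ w, F w) - (∑ w, G w) = ∑ w ∈ T, (F w - G w) := by
  rw [← Finset.sum_sub_distrib]
  exact (Finset.sum_subset (Finset.subset_univ T) fun w _ hw => by
    rw [hFG w hw, sub_self]).symm

lemma energy_diff (K L : ℕ) [NeZero K] [NeZero L] (h : ℝ) (hK : 1 < K) (hL : 1 < L)
    (η η' : Cfg K L) (p : ZMod K) (t : ZMod L)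
    (hvw : ∀ w, w ≠ (p, t) → η w = η' w) :
    energy K L h η' - energy K L h η =
      -( ((if η' (p,t) = η (p+1,t) then (1:ℝ) else 0) - (if η (p,t) = η (p+1,t) then (1:ℝ) else 0))
       + ((if η' (p,t) = η (p,t+1) then (1:ℝ) else 0) - (if η (p,t) = η (p,t+1) then (1:ℝ) else 0))
       + ((if η (p-1,t) = η' (p,t) then (1:ℝ) else 0) - (if η (p-1,t) = η (p,t) then (1:ℝ) else 0))
       + ((if η (p,t-1) = η' (p,t) then (1:ℝ) else 0) - (if η (p,t-1) = η (p,t) then (1:ℝ) else 0)) )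
      - h * ((if η' (p,t) = 1 then (1:ℝ) else 0) - (if η (p,t) = 1 then (1:ℝ) else 0)) := by
  have hK1 : (1 : ZMod K) ≠ 0 := by
    haveI : Fact (1 < K) := ⟨hK⟩; exact one_ne_zero
  have hL1 : (1 : ZMod L) ≠ 0 := by
    haveI : Fact (1 < L) := ⟨hL⟩; exact one_ne_zero
  have nep1 : p + 1 ≠ p := fun hc => hK1 (by linear_combination hc)
  have nem1 : p - 1 ≠ p := fun hc => hK1 (by linear_combination -hc)
  have net1 : t + 1 ≠ t := fun hc => hL1 (by linear_combination hc)
  have nemt1 : t - 1 ≠ t := fun hc => hL1 (by linear_combination -hc)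
  -- rewrites η' u = η u for u ≠ (p,t)
  have E : ∀ w : Vtx K L, w ≠ (p, t) → η' w = η w := fun w hw => (hvw w hw).symm
  have e1 : η' (p+1, t) = η (p+1, t) := E _ (fun hc => nep1 (congrArg Prod.fst hc))
  have e2 : η' (p, t+1) = η (p, t+1) := E _ (fun hc => net1 (congrArg Prod.snd hc))
  have e3 : η' (p-1, t) = η (p-1, t) := E _ (fun hc => nem1 (congrArg Prod.fst hc))
  have e4 : η' (p, t-1) = η (p, t-1) := E _ (fun hc => nemt1 (congrArg Prod.snd hc))
  have e5 : η' (p-1, t+1) = η (p-1, t+1) := E _ (fun hc => nem1 (congrArg Prod.fst hc))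
  have e6 : η' (p+1, t-1) = η (p+1, t-1) := E _ (fun hc => nemt1 (congrArg Prod.snd hc))
  have hrw1 : p - 1 + 1 = p := by ring
  have hrw2 : t - 1 + 1 = t := by ring
  have hFdiff :
      (∑ w : Vtx K L, (if η' w = 1 then (1:ℝ) else 0))
        - (∑ w : Vtx K L, (if η w = 1 then (1:ℝ) else 0))
      = (if η' (p,t) = 1 then (1:ℝ) else 0) - (if η (p,t) = 1 then (1:ℝ) else 0) := by
    rw [diff_sum _ _ {(p, t)} (fun w hw => by
      rw [E w (by simpa using hw)]), Finset.sum_singleton]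
  have hsub : ∀ w ∉ ({(p,t), (p-1,t), (p,t-1)} : Finset (Vtx K L)),
      ((if η' w = η' (w.1 + 1, w.2) then (1 : ℝ) else 0)
        + (if η' w = η' (w.1, w.2 + 1) then (1 : ℝ) else 0))
      = ((if η w = η (w.1 + 1, w.2) then (1 : ℝ) else 0)
        + (if η w = η (w.1, w.2 + 1) then (1 : ℝ) else 0)) := by
    intro w hw
    simp only [Finset.mem_insert, Finset.mem_singleton, not_or] at hw
    obtain ⟨hw1, hw2, hw3⟩ := hw
    have d1 : (w.1 + 1, w.2) ≠ (p, t) := by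
      intro hc
      apply hw2
      have c1 : w.1 + 1 = p := congrArg Prod.fst hc
      have c2 : w.2 = t := congrArg Prod.snd hc
      have : w.1 = p - 1 := by linear_combination c1
      rw [← this, ← c2]
    have d2 : (w.1, w.2 + 1) ≠ (p, t) := by
      intro hc
      apply hw3
      have c1 : w.1 = p := congrArg Prod.fst hc
      have c2 : w.2 + 1 = t := congrArg Prod.snd hc
      have : w.2 = t - 1 := by linear_combination c2
      rw [← this, ← c1]
    rw [E w hw1, E _ d1, E _ d2]
  have hGdiff :
      (∑ w : Vtx K L, ((if η' w = η' (w.1 + 1, w.2) then (1 : ℝ) else 0)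
          + (if η' w = η' (w.1, w.2 + 1) then (1 : ℝ) else 0)))
        - (∑ w : Vtx K L, ((if η w = η (w.1 + 1, w.2) then (1 : ℝ) else 0)
          + (if η w = η (w.1, w.2 + 1) then (1 : ℝ) else 0)))
      = ((if η' (p,t) = η (p+1,t) then (1:ℝ) else 0) - (if η (p,t) = η (p+1,t) then (1:ℝ) else 0))
       + ((if η' (p,t) = η (p,t+1) then (1:ℝ) else 0) - (if η (p,t) = η (p,t+1) then (1:ℝ) else 0))
       + ((if η (p-1,t) = η' (p,t) then (1:ℝ) else 0) - (if η (p-1,t) = η (p,t) then (1:ℝ) else 0))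
       + ((if η (p,t-1) = η' (p,t) then (1:ℝ) else 0) - (if η (p,t-1) = η (p,t) then (1:ℝ) else 0)) := by
    rw [diff_sum _ _ {(p,t), (p-1,t), (p,t-1)} hsub]
    rw [Finset.sum_insert (by
        simp only [Finset.mem_insert, Finset.mem_singleton, Prod.mk.injEq, not_or]
        exact ⟨fun ⟨a, _⟩ => nem1 a.symm, fun ⟨_, b⟩ => nemt1 b.symm⟩),
      Finset.sum_insert (by
        simp only [Finset.mem_singleton, Prod.mk.injEq, not_and]
        intro hc1
        exact absurd hc1 nem1),
      Finset.sum_singleton]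
    simp only [hrw1, hrw2, e1, e2, e3, e4, e5, e6]
    ring
  unfold energy
  have hmul : h * ((∑ w : Vtx K L, (if η' w = 1 then (1:ℝ) else 0))
      - (∑ w : Vtx K L, (if η w = 1 then (1:ℝ) else 0)))
      = h * ((if η' (p,t) = 1 then (1:ℝ) else 0) - (if η (p,t) = 1 then (1:ℝ) else 0)) := by
    rw [hFdiff]
  linarith [hGdiff, hmul]


/-- any single-spin update of a configuration in
`B̄¹_{ℓ*−1,ℓ*}(m,1)` strictly changes the energy. -/
theorem no_flat_move_at_saddle (q K L : ℕ) [NeZero K] [NeZero L] (h : ℝ)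
    (hq : 2 < q) (hh0 : 0 < h) (hh1 : h < 1)
    (hhint : ¬ ∃ n : ℤ, (2 : ℝ) / h = (n : ℝ))
    (hK : 3 * ellStar h ≤ K) (hKL : K ≤ L) :
    ∀ m, 2 ≤ m → m ≤ q →
      ∀ η ∈ Bbar K L (ellStar h - 1) (ellStar h) 1 m 1,
        ∀ η' : Cfg K L, IsConf q K L η' → Communicates K L η η' →
          energy K L h η' ≠ energy K L h η := by
  intro m hm2 hmq η hη η' hconf' hcomm hEq
  have hl3 : 3 ≤ ellStar h := by
    have h2 : (2 : ℝ) < 2 / h := by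
      rw [lt_div_iff₀ hh0]; nlinarith
    have := Nat.lt_ceil.mpr (show ((2 : ℕ) : ℝ) < 2 / h by push_cast; exact h2)
    exact this
  have hK9 : 9 ≤ K := by omega
  have hL9 : 9 ≤ L := by omega
  obtain ⟨A, hA, hA1, hAm⟩ := hη
  obtain ⟨v, hv, hvw⟩ := hcomm
  obtain ⟨p, t⟩ := v
  have hdiff := energy_diff K L h (by omega) (by omega) η η' p t hvw
  rw [hEq, sub_self] at hdiff
  have hint : ∀ (P Q : Prop) [Decidable P] [Decidable Q],
      ∃ k : ℤ, ((if P then (1:ℝ) else 0) - (if Q then (1:ℝ) else 0)) = (k : ℝ) := by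
    intro P Q _ _
    split_ifs
    · exact ⟨0, by norm_num⟩
    · exact ⟨1, by norm_num⟩
    · exact ⟨-1, by norm_num⟩
    · exact ⟨0, by norm_num⟩
  by_cases hs1 : η (p,t) = 1 <;> by_cases hs'1 : η' (p,t) = 1
  · exact hv (by rw [hs1, hs'1])
  · -- s = 1, s' ≠ 1
    rw [if_pos hs1, if_neg hs'1] at hdiff
    obtain ⟨k1, hk1⟩ := hint (η' (p,t) = η (p+1,t)) (η (p,t) = η (p+1,t))
    obtain ⟨k2, hk2⟩ := hint (η' (p,t) = η (p,t+1)) (η (p,t) = η (p,t+1))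
    obtain ⟨k3, hk3⟩ := hint (η (p-1,t) = η' (p,t)) (η (p-1,t) = η (p,t))
    obtain ⟨k4, hk4⟩ := hint (η (p,t-1) = η' (p,t)) (η (p,t-1) = η (p,t))
    rw [hk1, hk2, hk3, hk4] at hdiff
    have hksum : ((k1 + k2 + k3 + k4 : ℤ) : ℝ) = h := by push_cast; linarith
    have h0' : (0 : ℤ) < k1 + k2 + k3 + k4 := by
      exact_mod_cast (show (0:ℝ) < ((k1 + k2 + k3 + k4 : ℤ) : ℝ) by rw [hksum]; exact hh0)
    have h1' : k1 + k2 + k3 + k4 < 1 := by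
      exact_mod_cast (show ((k1 + k2 + k3 + k4 : ℤ) : ℝ) < 1 by rw [hksum]; exact hh1)
    omega
  · -- s ≠ 1, s' = 1
    rw [if_neg hs1, if_pos hs'1] at hdiff
    obtain ⟨k1, hk1⟩ := hint (η' (p,t) = η (p+1,t)) (η (p,t) = η (p+1,t))
    obtain ⟨k2, hk2⟩ := hint (η' (p,t) = η (p,t+1)) (η (p,t) = η (p,t+1))
    obtain ⟨k3, hk3⟩ := hint (η (p-1,t) = η' (p,t)) (η (p-1,t) = η (p,t))
    obtain ⟨k4, hk4⟩ := hint (η (p,t-1) = η' (p,t)) (η (p,t-1) = η (p,t))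
    rw [hk1, hk2, hk3, hk4] at hdiff
    have hksum : ((k1 + k2 + k3 + k4 : ℤ) : ℝ) = -h := by push_cast; linarith
    have h0' : k1 + k2 + k3 + k4 < 0 := by
      exact_mod_cast (show ((k1 + k2 + k3 + k4 : ℤ) : ℝ) < 0 by rw [hksum]; linarith)
    have h1' : (-1 : ℤ) < k1 + k2 + k3 + k4 := by
      exact_mod_cast (show (-1:ℝ) < ((k1 + k2 + k3 + k4 : ℤ) : ℝ) by rw [hksum]; linarith)
    omega
  · -- s ≠ 1, s' ≠ 1 : the geometric case
    rw [if_neg hs1, if_neg hs'1] at hdiff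
    have spin : ∀ u : Vtx K L, η u = 1 ∨ η u = m := by
      intro u
      by_cases hu : u ∈ A
      · exact Or.inl (hA1 u hu)
      · exact Or.inr (hAm u hu)
    have hvA : (p, t) ∉ A := fun hc => hs1 (hA1 _ hc)
    have hsm : η (p, t) = m := (spin (p, t)).resolve_left hs1
    have hs'm : η' (p, t) ≠ m := fun hc => hv (hsm.trans hc.symm)
    have hno : ∀ u : Vtx K L, η u ≠ η' (p, t) := by
      intro u hc
      rcases spin u with h' | h'
      · exact hs'1 (hc.symm.trans h')
      · exact hs'm (hc.symm.trans h')
    have n1 : ¬ (η' (p,t) = η (p+1,t)) := fun hc => hno (p+1,t) hc.symm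
    have n2 : ¬ (η' (p,t) = η (p,t+1)) := fun hc => hno (p,t+1) hc.symm
    have n3 : ¬ (η (p-1,t) = η' (p,t)) := hno (p-1,t)
    have n4 : ¬ (η (p,t-1) = η' (p,t)) := hno (p,t-1)
    rw [if_neg n1, if_neg n2, if_neg n3, if_neg n4] at hdiff
    have B : ∀ (P : Prop) [Decidable P], (0:ℝ) ≤ (if P then (1:ℝ) else 0) ∧
        (if P then (1:ℝ) else 0) ≤ 1 := by
      intro P _; split_ifs <;> norm_num
    have z1 : ¬ (η (p,t) = η (p+1,t)) := by
      intro hc; rw [if_pos hc] at hdiff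
      have b2 := B (η (p,t) = η (p,t+1)); have b3 := B (η (p-1,t) = η (p,t))
      have b4 := B (η (p,t-1) = η (p,t))
      linarith [b2.1, b3.1, b4.1]
    have z2 : ¬ (η (p,t) = η (p,t+1)) := by
      intro hc; rw [if_pos hc] at hdiff
      have b1 := B (η (p,t) = η (p+1,t)); have b3 := B (η (p-1,t) = η (p,t))
      have b4 := B (η (p,t-1) = η (p,t))
      linarith [b1.1, b3.1, b4.1]
    have z3 : ¬ (η (p-1,t) = η (p,t)) := by
      intro hc; rw [if_pos hc] at hdiff
      have b1 := B (η (p,t) = η (p+1,t)); have b2 := B (η (p,t) = η (p,t+1))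
      have b4 := B (η (p,t-1) = η (p,t))
      linarith [b1.1, b2.1, b4.1]
    have z4 : ¬ (η (p,t-1) = η (p,t)) := by
      intro hc; rw [if_pos hc] at hdiff
      have b1 := B (η (p,t) = η (p+1,t)); have b2 := B (η (p,t) = η (p,t+1))
      have b3 := B (η (p-1,t) = η (p,t))
      linarith [b1.1, b2.1, b3.1]
    have mem1 : (p+1, t) ∈ A := by
      by_contra hc; exact z1 (by rw [hsm, hAm _ hc])
    have mem2 : (p, t+1) ∈ A := by
      by_contra hc; exact z2 (by rw [hsm, hAm _ hc])
    have mem3 : (p-1, t) ∈ A := by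
      by_contra hc; exact z3 (by rw [hsm, hAm _ hc])
    have mem4 : (p, t-1) ∈ A := by
      by_contra hc; exact z4 (by rw [hsm, hAm _ hc])
    obtain ⟨x, y, j0, hj0, hc4⟩ := hA
    rcases hc4 with hcA | hcA | hcA | hcA <;>
      [rw [hbar_one] at hcA; rw [hbar_one] at hcA; rw [vbar_one] at hcA;
        rw [vbar_one] at hcA] <;>
      rw [hcA] at mem1 mem2 mem3 mem4 hvA <;>
      exact hvA (Set.mem_union_left _
        (no_hole K L _ _ (by omega) (by omega) x y _ p t mem1 mem3 mem2 mem4))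

end PottsPos
end
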